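/- arXiv:2310.04377 — 5 statements merged into one kernel-verified Lean document; each statement's English description precedes it below -/
import Mathlib

section
/- Let n ≥ 2 and let F ∈ Matₙ(ℂ) be principal nilpotent. Suppose (h, e, F) and (h′, e′, F) are two sl₂-triples of n×n complex matrices with the same third element F. Then there exists a unique traceless matrix z ∈ Matₙ(ℂ) commuting with F such that exp(z)·h·exp(z)⁻¹ = h′ and exp(z)·e·exp(z)⁻¹ = e′, where exp denotes the matrix exponential. (Thus the exponentials of the traceless part of the centralizer of F act simply transitively on the sl₂-triples containing F.) -/
open Matrix

section AuxLemmas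

/-- A nilpotent `n × n` matrix satisfies `F ^ n = 0`. -/
lemma aux_pow_self_eq_zero {n : ℕ} {F : Matrix (Fin n) (Fin n) ℂ} (hF : IsNilpotent F) :
    F ^ n = 0 := by
  have h2 := Matrix.isNilpotent_charpoly_sub_pow_of_isNilpotent hF
  rw [Fintype.card_fin] at h2
  have h3 : F.charpoly = Polynomial.X ^ n := by
    have := h2.eq_zero
    rwa [sub_eq_zero] at this
  have h4 := Matrix.aeval_self_charpoly F
  rw [h3] at h4
  simpa using h4

lemma aux_trace_pow_eq_zero {n : ℕ} {F : Matrix (Fin n) (Fin n) ℂ} (hF : IsNilpotent F)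
    {k : ℕ} (hk : k ≠ 0) : Matrix.trace (F ^ k) = 0 := by
  have h1 : IsNilpotent (F ^ k) := by
    obtain ⟨m, hm⟩ := hF
    exact ⟨m, by rw [← pow_mul, mul_comm, pow_mul, hm, zero_pow hk]⟩
  exact (Matrix.isNilpotent_trace_of_isNilpotent h1).eq_zero

lemma aux_exists_cyclic {n : ℕ} {F : Matrix (Fin n) (Fin n) ℂ} (h : F ^ (n - 1) ≠ 0) :
    ∃ v : Fin n → ℂ, (F ^ (n - 1)) *ᵥ v ≠ 0 := by
  by_contra hc
  push_neg at hc
  apply h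
  ext i j
  have := congrFun (hc (Pi.single j 1)) i
  simpa using this

lemma aux_coeff_zero {n : ℕ} {F : Matrix (Fin n) (Fin n) ℂ} (Fn : F ^ n = 0)
    {v : Fin n → ℂ} (hv : (F ^ (n - 1)) *ᵥ v ≠ 0)
    (g : Fin n → ℂ) (hg : ∑ k : Fin n, g k • (F ^ (k : ℕ)) *ᵥ v = 0) :
    ∀ k, g k = 0 := by
  suffices H : ∀ m : ℕ, ∀ k : Fin n, (k : ℕ) = m → g k = 0 by
    intro k; exact H k k rfl
  intro m
  induction m using Nat.strong_induction_on with
  | _ m IH =>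
    intro k hk
    have hmn : m ≤ n - 1 := by have := k.isLt; omega
    have h1 : ∑ j : Fin n, g j • (F ^ (n - 1 - m + (j : ℕ))) *ᵥ v = 0 := by
      have h2 := congrArg (Matrix.mulVecLin (F ^ (n - 1 - m))) hg
      rw [map_sum] at h2
      simpa [Matrix.mulVec_smul, Matrix.mulVec_mulVec, ← pow_add] using h2
    have h3 : ∀ j ∈ Finset.univ, j ≠ k → g j • (F ^ (n - 1 - m + (j : ℕ))) *ᵥ v = 0 := by
      intro j _ hj
      rcases lt_trichotomy (j : ℕ) m with hlt | heq | hgt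
      · rw [IH _ hlt j rfl, zero_smul]
      · exact absurd (Fin.ext (heq.trans hk.symm)) hj
      · have hz : F ^ (n - 1 - m + (j : ℕ)) = 0 := pow_eq_zero_of_le (by omega) Fn
        rw [hz, Matrix.zero_mulVec, smul_zero]
    rw [Finset.sum_eq_single k (h3) (by simp)] at h1
    rw [hk] at h1
    have h4 : n - 1 - m + m = n - 1 := by omega
    rw [h4] at h1
    rcases smul_eq_zero.mp h1 with h5 | h5
    · exact h5
    · exact absurd h5 hv

/-- distributing a sum of scaled matrices over `mulVec`. -/
lemma aux_sum_smul_mulVec {n : ℕ} (c : Fin n → ℂ) (M : Fin n → Matrix (Fin n) (Fin n) ℂ)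
    (w : Fin n → ℂ) :
    (∑ j : Fin n, c j • M j) *ᵥ w = ∑ j : Fin n, c j • (M j *ᵥ w) := by
  rw [← Matrix.toLin'_apply, map_sum, LinearMap.sum_apply]
  simp

lemma aux_mulVec_sum {n : ℕ} (M : Matrix (Fin n) (Fin n) ℂ) (u : Fin n → Fin n → ℂ) :
    M *ᵥ (∑ j : Fin n, u j) = ∑ j : Fin n, M *ᵥ u j := by
  rw [← Matrix.mulVecLin_apply, map_sum]
  simp

lemma aux_matrix_indep {n : ℕ} {F : Matrix (Fin n) (Fin n) ℂ} (Fn : F ^ n = 0)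
    {v : Fin n → ℂ} (hv : (F ^ (n - 1)) *ᵥ v ≠ 0)
    (c : Fin n → ℂ) (hc : ∑ k : Fin n, c k • F ^ (k : ℕ) = 0) : ∀ k, c k = 0 := by
  apply aux_coeff_zero Fn hv
  have h1 := congrArg (fun A : Matrix (Fin n) (Fin n) ℂ => A *ᵥ v) hc
  simp only [aux_sum_smul_mulVec, Matrix.zero_mulVec] at h1
  exact h1

lemma aux_centralizer {n : ℕ} (hn : 1 ≤ n) {F : Matrix (Fin n) (Fin n) ℂ} (Fn : F ^ n = 0)
    {v : Fin n → ℂ} (hv : (F ^ (n - 1)) *ᵥ v ≠ 0)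
    {A : Matrix (Fin n) (Fin n) ℂ} (hA : A * F = F * A) :
    ∃ c : Fin n → ℂ, A = ∑ k : Fin n, c k • F ^ (k : ℕ) := by
  have hne : Nonempty (Fin n) := ⟨⟨0, hn⟩⟩
  have li : LinearIndependent ℂ (fun k : Fin n => (F ^ (k : ℕ)) *ᵥ v) := by
    rw [Fintype.linearIndependent_iff]
    exact fun g hg => aux_coeff_zero Fn hv g hg
  let b : Module.Basis (Fin n) ℂ (Fin n → ℂ) :=
    basisOfLinearIndependentOfCardEqFinrank li (by simp)
  have hb : ∀ k : Fin n, b k = (F ^ (k : ℕ)) *ᵥ v := fun k =>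
    congrFun (coe_basisOfLinearIndependentOfCardEqFinrank li (by simp)) k
  obtain ⟨cc, hAv⟩ : ∃ cc : Fin n → ℂ, A *ᵥ v = ∑ k : Fin n, cc k • (F ^ (k : ℕ)) *ᵥ v := by
    refine ⟨fun k => b.repr (A *ᵥ v) k, ?_⟩
    conv_lhs => rw [← b.sum_repr (A *ᵥ v)]
    exact Finset.sum_congr rfl fun k _ => by rw [hb]
  refine ⟨cc, ?_⟩
  have hcomm : ∀ k : ℕ, A * F ^ k = F ^ k * A := fun k => (Commute.pow_right hA k)
  apply Matrix.toLin'.injective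
  apply b.ext
  intro k
  rw [Matrix.toLin'_apply, Matrix.toLin'_apply, hb]
  calc A *ᵥ ((F ^ (k : ℕ)) *ᵥ v)
      = (F ^ (k : ℕ)) *ᵥ (A *ᵥ v) := by
        rw [Matrix.mulVec_mulVec, Matrix.mulVec_mulVec, hcomm]
    _ = ∑ j : Fin n, cc j • (F ^ ((j : ℕ) + (k : ℕ))) *ᵥ v := by
        rw [hAv, aux_mulVec_sum]
        refine Finset.sum_congr rfl fun j _ => ?_
        rw [Matrix.mulVec_smul, Matrix.mulVec_mulVec, ← pow_add, Nat.add_comm]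
    _ = (∑ j : Fin n, cc j • F ^ (j : ℕ)) *ᵥ ((F ^ (k : ℕ)) *ᵥ v) := by
        rw [aux_sum_smul_mulVec]
        refine Finset.sum_congr rfl fun j _ => ?_
        rw [Matrix.mulVec_mulVec, ← pow_add]

lemma aux_trace_sum {n : ℕ} (hn : 1 ≤ n) {F : Matrix (Fin n) (Fin n) ℂ} (hF : IsNilpotent F)
    (c : Fin n → ℂ) :
    Matrix.trace (∑ k : Fin n, c k • F ^ (k : ℕ)) = n * c ⟨0, hn⟩ := by
  rw [Matrix.trace_sum, Finset.sum_eq_single (⟨0, hn⟩ : Fin n)]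
  · simp [Matrix.trace_smul]
    ring
  · intro k _ hk
    have hk0 : (k : ℕ) ≠ 0 := fun hh => hk (Fin.ext hh)
    rw [Matrix.trace_smul, aux_trace_pow_eq_zero hF hk0, smul_zero]
  · simp

lemma aux_comm_pow {n : ℕ} {F h : Matrix (Fin n) (Fin n) ℂ}
    (hhF : h * F - F * h = (-2 : ℂ) • F) (k : ℕ) :
    h * F ^ k - F ^ k * h = ((-2 : ℂ) * k) • F ^ k := by
  induction k with
  | zero => simp
  | succ k ih =>
    have key : h * F ^ (k + 1) - F ^ (k + 1) * h
        = (h * F - F * h) * F ^ k + F * (h * F ^ k - F ^ k * h) := by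
      rw [pow_succ']
      noncomm_ring
    rw [key, hhF, ih, smul_mul_assoc, mul_smul_comm, ← pow_succ', ← add_smul]
    congr 1
    push_cast
    ring

lemma aux_nilpotent_of_c0 {n : ℕ} {F : Matrix (Fin n) (Fin n) ℂ} (Fn : F ^ n = 0)
    (c : Fin n → ℂ) (hc0 : ∀ k : Fin n, (k : ℕ) = 0 → c k = 0) :
    (∑ k : Fin n, c k • F ^ (k : ℕ)) ^ n = 0 := by
  set y : Matrix (Fin n) (Fin n) ℂ := ∑ k : Fin n, c k • F ^ ((k : ℕ) - 1) with hy
  have hzy : (∑ k : Fin n, c k • F ^ (k : ℕ)) = F * y := by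
    rw [hy, Finset.mul_sum]
    refine Finset.sum_congr rfl fun k _ => ?_
    rw [mul_smul_comm]
    rcases Nat.eq_zero_or_pos (k : ℕ) with h0 | h1
    · rw [hc0 k h0, zero_smul, zero_smul]
    · congr 1
      rw [← pow_succ']
      congr 1
      omega
  have hcom : Commute F y := by
    apply Commute.sum_right
    intro k _
    exact ((Commute.refl F).pow_right _).smul_right _
  rw [hzy, hcom.mul_pow, Fn, zero_mul]

lemma aux_sums_commute {n : ℕ} (F : Matrix (Fin n) (Fin n) ℂ) (c d : Fin n → ℂ) :
    Commute (∑ k : Fin n, c k • F ^ (k : ℕ)) (∑ k : Fin n, d k • F ^ (k : ℕ)) := by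
  apply Commute.sum_right
  intro k _
  apply Commute.sum_left
  intro j _
  exact (((Commute.refl F).pow_pow _ _).smul_left _).smul_right _

lemma aux_sum_commute_F {n : ℕ} (F : Matrix (Fin n) (Fin n) ℂ) (c : Fin n → ℂ) :
    Commute (∑ k : Fin n, c k • F ^ (k : ℕ)) F := by
  apply Commute.sum_left
  intro j _
  exact ((Commute.refl F).pow_left _).smul_left _

lemma aux_exp_eq_sum {n N : ℕ} {z : Matrix (Fin n) (Fin n) ℂ} (hzn : z ^ n = 0) (hN : n ≤ N) :
    NormedSpace.exp z = ∑ m ∈ Finset.range N, ((Nat.factorial m : ℂ))⁻¹ • z ^ m := by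
  rw [NormedSpace.exp_eq_tsum (𝕂 := ℂ)]
  refine tsum_eq_sum fun m hm => ?_
  rw [Finset.mem_range, not_lt] at hm
  rw [pow_eq_zero_of_le (by omega) hzn, smul_zero]

lemma aux_fact_coeff (m : ℕ) :
    ((Nat.factorial (m + 1) : ℂ))⁻¹ * ((m + 1 : ℕ) : ℂ) = ((Nat.factorial m : ℂ))⁻¹ := by
  have h1 : ((m + 1 : ℕ) : ℂ) ≠ 0 := Nat.cast_ne_zero.mpr (Nat.succ_ne_zero m)
  have h2 : ((Nat.factorial m : ℂ)) ≠ 0 := Nat.cast_ne_zero.mpr (Nat.factorial_ne_zero m)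
  rw [Nat.factorial_succ]
  push_cast
  push_cast at h1
  field_simp

lemma aux_exp_mul {n : ℕ} {z w h : Matrix (Fin n) (Fin n) ℂ}
    (hzn : z ^ n = 0) (hcomm : z * w = w * z) (hw : z * h - h * z = w) :
    NormedSpace.exp z * h = (h + w) * NormedSpace.exp z := by
  have hzh : z * h = h * z + w := by rw [← hw]; abel
  have hkey : ∀ m : ℕ, z ^ (m + 1) * h = h * z ^ (m + 1) + ((m + 1 : ℕ) : ℂ) • (w * z ^ m) := by
    intro m
    induction m with
    | zero => simpa using hzh
    | succ m ih =>
      have h1 : z ^ (m + 1 + 1) * h = z * (z ^ (m + 1) * h) := by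
        rw [← mul_assoc, ← pow_succ']
      rw [h1, ih, mul_add, mul_smul_comm, ← mul_assoc, hzh, add_mul, mul_assoc h z,
        ← pow_succ', ← mul_assoc, hcomm, mul_assoc, ← pow_succ']
      push_cast
      module
  rw [aux_exp_eq_sum hzn (Nat.le_succ n), Finset.sum_mul, Finset.mul_sum]
  simp only [smul_mul_assoc, mul_smul_comm]
  have hL : ∑ m ∈ Finset.range (n + 1), ((Nat.factorial m : ℂ))⁻¹ • (z ^ m * h)
      = ((∑ m ∈ Finset.range n, ((Nat.factorial (m + 1) : ℂ))⁻¹ • (h * z ^ (m + 1)))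
        + ∑ m ∈ Finset.range n, ((Nat.factorial m : ℂ))⁻¹ • (w * z ^ m)) + h := by
    rw [Finset.sum_range_succ']
    have hterm : ∀ m ∈ Finset.range n,
        ((Nat.factorial (m + 1) : ℂ))⁻¹ • (z ^ (m + 1) * h)
        = ((Nat.factorial (m + 1) : ℂ))⁻¹ • (h * z ^ (m + 1))
          + ((Nat.factorial m : ℂ))⁻¹ • (w * z ^ m) := by
      intro m _
      rw [hkey m, smul_add, smul_smul, aux_fact_coeff]
    rw [Finset.sum_congr rfl hterm, Finset.sum_add_distrib]
    simp
  have hR : ∑ m ∈ Finset.range (n + 1), ((Nat.factorial m : ℂ))⁻¹ • ((h + w) * z ^ m)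
      = ((∑ m ∈ Finset.range n, ((Nat.factorial (m + 1) : ℂ))⁻¹ • (h * z ^ (m + 1)))
        + ∑ m ∈ Finset.range n, ((Nat.factorial m : ℂ))⁻¹ • (w * z ^ m)) + h := by
    simp only [add_mul, smul_add]
    rw [Finset.sum_add_distrib]
    have e1 : ∑ m ∈ Finset.range (n + 1), ((Nat.factorial m : ℂ))⁻¹ • (h * z ^ m)
        = (∑ m ∈ Finset.range n, ((Nat.factorial (m + 1) : ℂ))⁻¹ • (h * z ^ (m + 1))) + h := by
      rw [Finset.sum_range_succ']
      simp
    have e2 : ∑ m ∈ Finset.range (n + 1), ((Nat.factorial m : ℂ))⁻¹ • (w * z ^ m)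
        = ∑ m ∈ Finset.range n, ((Nat.factorial m : ℂ))⁻¹ • (w * z ^ m) := by
      rw [Finset.sum_range_succ, hzn, mul_zero, smul_zero, add_zero]
    rw [e1, e2]
    abel
  rw [hL, hR]

end AuxLemmas

/-- A square matrix `N` of size `n` is *principal nilpotent* if it is nilpotent and
`N ^ (n - 1) ≠ 0`. -/
def Matrix.IsPrincipalNilpotent {n : ℕ} (N : Matrix (Fin n) (Fin n) ℂ) : Prop :=
  IsNilpotent N ∧ N ^ (n - 1) ≠ 0

/-- `(h, e, f)` is an `sl₂`-triple of matrices: `⁅h,e⁆ = 2e`, `⁅h,f⁆ = -2f`, `⁅e,f⁆ = h`. -/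
def IsSl2TripleM {n : ℕ} (h e f : Matrix (Fin n) (Fin n) ℂ) : Prop :=
  h * e - e * h = (2 : ℂ) • e ∧ h * f - f * h = (-2 : ℂ) • f ∧ e * f - f * e = h

/-- The exponentials of the traceless part of the centralizer of a principal nilpotent
matrix `F` act simply transitively on the `sl₂`-triples with third element `F`. -/
theorem sl2_triples_simply_transitive
    (n : ℕ) (hn : 2 ≤ n) (F : Matrix (Fin n) (Fin n) ℂ)
    (hF : F.IsPrincipalNilpotent)
    (h e h' e' : Matrix (Fin n) (Fin n) ℂ)
    (hT : IsSl2TripleM h e F) (hT' : IsSl2TripleM h' e' F) :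
    ∃! z : Matrix (Fin n) (Fin n) ℂ,
      z.trace = 0 ∧ z * F = F * z ∧
      NormedSpace.exp z * h * (NormedSpace.exp z)⁻¹ = h' ∧
      NormedSpace.exp z * e * (NormedSpace.exp z)⁻¹ = e' := by
  obtain ⟨hFnil, hFpow⟩ := hF
  obtain ⟨hT1, hT2, hT3⟩ := hT
  obtain ⟨hT1', hT2', hT3'⟩ := hT'
  have hn1 : 1 ≤ n := by omega
  have Fn : F ^ n = 0 := aux_pow_self_eq_zero hFnil
  obtain ⟨v, hv⟩ := aux_exists_cyclic hFpow
  -- generic facts about exponential inverses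
  have hexpinv : ∀ y : Matrix (Fin n) (Fin n) ℂ,
      NormedSpace.exp y * (NormedSpace.exp y)⁻¹ = 1 ∧
      (NormedSpace.exp y)⁻¹ * NormedSpace.exp y = 1 := by
    intro y
    rw [← Matrix.exp_neg y]
    constructor
    · rw [← Matrix.exp_add_of_commute y (-y) ((Commute.refl y).neg_right), add_neg_cancel,
        NormedSpace.exp_zero]
    · rw [← Matrix.exp_add_of_commute (-y) y ((Commute.refl y).neg_left), neg_add_cancel,
        NormedSpace.exp_zero]
  -- the commutator of a power-sum with a matrix b satisfying [b,F] = -2F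
  have hbrack : ∀ b : Matrix (Fin n) (Fin n) ℂ, b * F - F * b = (-2 : ℂ) • F →
      ∀ c : Fin n → ℂ,
      (∑ k : Fin n, c k • F ^ (k : ℕ)) * b - b * (∑ k : Fin n, c k • F ^ (k : ℕ))
        = ∑ k : Fin n, ((2 : ℂ) * (k : ℕ) * c k) • F ^ (k : ℕ) := by
    intro b hb c
    rw [Finset.sum_mul, Finset.mul_sum, ← Finset.sum_sub_distrib]
    refine Finset.sum_congr rfl fun k _ => ?_
    rw [smul_mul_assoc, mul_smul_comm, ← smul_sub]
    have h2 : F ^ (k : ℕ) * b - b * F ^ (k : ℕ) = ((2 : ℂ) * (k : ℕ)) • F ^ (k : ℕ) := by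
      have h3 := aux_comm_pow hb (k : ℕ)
      have h4 : F ^ (k : ℕ) * b - b * F ^ (k : ℕ) = -(b * F ^ (k : ℕ) - F ^ (k : ℕ) * b) := by
        abel
      rw [h4, h3, ← neg_smul]
      congr 1
      ring
    rw [h2, smul_smul]
    congr 1
    ring
  -- trace facts
  have htr : ∀ a b : Matrix (Fin n) (Fin n) ℂ, Matrix.trace (a * b - b * a) = 0 := by
    intro a b
    rw [Matrix.trace_sub, Matrix.trace_mul_comm, sub_self]
  have htrh : Matrix.trace h = 0 := by rw [← hT3]; exact htr e F
  have htrh' : Matrix.trace h' = 0 := by rw [← hT3']; exact htr e' F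
  have htrD : Matrix.trace (h' - h) = 0 := by rw [Matrix.trace_sub, htrh, htrh', sub_self]
  have hnne : (n : ℂ) ≠ 0 := Nat.cast_ne_zero.mpr (by omega)
  -- D = h' - h lies in the centralizer
  have hDF : (h' - h) * F = F * (h' - h) := by
    have h0 : (h' - h) * F - F * (h' - h) = (h' * F - F * h') - (h * F - F * h) := by
      noncomm_ring
    rw [hT2', hT2, sub_self] at h0
    exact sub_eq_zero.mp h0
  obtain ⟨d, hd⟩ := aux_centralizer hn1 Fn hv hDF
  have hd0 : d ⟨0, hn1⟩ = 0 := by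
    have h9 : (n : ℂ) * d ⟨0, hn1⟩ = 0 := by
      rw [← aux_trace_sum hn1 hFnil d, ← hd, htrD]
    exact (mul_eq_zero.mp h9).resolve_left hnne
  -- definition of z
  obtain ⟨c, hc0, hcval⟩ : ∃ c : Fin n → ℂ, (∀ k : Fin n, (k : ℕ) = 0 → c k = 0) ∧
      (∀ k : Fin n, (k : ℕ) ≠ 0 → c k = d k / (2 * (k : ℕ))) :=
    ⟨fun k => if (k : ℕ) = 0 then 0 else d k / (2 * (k : ℕ)),
      fun k hk => if_pos hk, fun k hk => if_neg hk⟩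
  obtain ⟨z, hzdef⟩ : ∃ z : Matrix (Fin n) (Fin n) ℂ,
      z = ∑ k : Fin n, c k • F ^ (k : ℕ) := ⟨_, rfl⟩
  have hztr : Matrix.trace z = 0 := by
    rw [hzdef, aux_trace_sum hn1 hFnil c, hc0 ⟨0, hn1⟩ rfl, mul_zero]
  have hzF : z * F = F * z := by rw [hzdef]; exact aux_sum_commute_F F c
  have hzn : z ^ n = 0 := by rw [hzdef]; exact aux_nilpotent_of_c0 Fn c hc0
  -- the bracket of z with h is exactly h' - h
  have hzh : z * h - h * z = h' - h := by
    rw [hzdef, hbrack h hT2 c, hd]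
    refine Finset.sum_congr rfl fun k _ => ?_
    congr 1
    by_cases hk : (k : ℕ) = 0
    · have hkk : k = ⟨0, hn1⟩ := Fin.ext hk
      rw [hc0 k hk, hkk, hd0, mul_zero]
    · have hknz : ((k : ℕ) : ℂ) ≠ 0 := Nat.cast_ne_zero.mpr hk
      rw [hcval k hk]
      field_simp
  have hzw : z * (h' - h) = (h' - h) * z := by
    rw [hzdef, hd]
    exact aux_sums_commute F c d
  have hzmul : NormedSpace.exp z * h = (h + (h' - h)) * NormedSpace.exp z :=
    aux_exp_mul hzn hzw hzh
  have hconjh : NormedSpace.exp z * h * (NormedSpace.exp z)⁻¹ = h' := by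
    rw [hzmul, mul_assoc, (hexpinv z).1, mul_one]
    abel
  -- now the e component
  set E := NormedSpace.exp z with hE
  have hEE : E * E⁻¹ = 1 := (hexpinv z).1
  have hEE' : E⁻¹ * E = 1 := (hexpinv z).2
  have hEF : E * F = F * E := by
    rw [hE, aux_exp_eq_sum hzn (le_refl n)]
    refine Commute.sum_left _ _ _ fun m _ => ?_
    have hzFc : Commute z F := hzF
    exact (hzFc.pow_left m).smul_left _
  have hEinvF : E⁻¹ * F = F * E⁻¹ := by
    calc E⁻¹ * F = E⁻¹ * F * (E * E⁻¹) := by rw [hEE, mul_one]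
      _ = E⁻¹ * (F * E) * E⁻¹ := by noncomm_ring
      _ = E⁻¹ * (E * F) * E⁻¹ := by rw [hEF]
      _ = (E⁻¹ * E) * (F * E⁻¹) := by noncomm_ring
      _ = F * E⁻¹ := by rw [hEE', one_mul]
  have hconj_mul : ∀ A B : Matrix (Fin n) (Fin n) ℂ,
      (E * A * E⁻¹) * (E * B * E⁻¹) = E * (A * B) * E⁻¹ := by
    intro A B
    calc (E * A * E⁻¹) * (E * B * E⁻¹) = E * A * ((E⁻¹ * E) * (B * E⁻¹)) := by noncomm_ring
      _ = E * (A * B) * E⁻¹ := by rw [hEE']; noncomm_ring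
  have hsub : ∀ A B : Matrix (Fin n) (Fin n) ℂ,
      E * A * E⁻¹ - E * B * E⁻¹ = E * (A - B) * E⁻¹ := by
    intro A B
    noncomm_ring
  set e₂ := E * e * E⁻¹ with he₂
  have ht1₂ : h' * e₂ - e₂ * h' = (2 : ℂ) • e₂ := by
    rw [← hconjh, he₂, hconj_mul, hconj_mul, hsub, hT1, mul_smul_comm, smul_mul_assoc]
  have he₂F : e₂ * F = E * (e * F) * E⁻¹ := by
    rw [he₂]
    calc (E * e * E⁻¹) * F = E * e * (E⁻¹ * F) := by noncomm_ring
      _ = E * e * (F * E⁻¹) := by rw [hEinvF]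
      _ = E * (e * F) * E⁻¹ := by noncomm_ring
  have hFe₂ : F * e₂ = E * (F * e) * E⁻¹ := by
    rw [he₂]
    calc F * (E * e * E⁻¹) = (F * E) * (e * E⁻¹) := by noncomm_ring
      _ = (E * F) * (e * E⁻¹) := by rw [← hEF]
      _ = E * (F * e) * E⁻¹ := by noncomm_ring
  have ht3₂ : e₂ * F - F * e₂ = h' := by
    rw [he₂F, hFe₂, hsub, hT3, hconjh]
  -- uniqueness of the e-component: e₂ = e'
  have he₂e' : e₂ = e' := by
    have huF : (e₂ - e') * F = F * (e₂ - e') := by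
      have h0 : (e₂ - e') * F - F * (e₂ - e') = (e₂ * F - F * e₂) - (e' * F - F * e') := by
        noncomm_ring
      rw [ht3₂, hT3', sub_self] at h0
      exact sub_eq_zero.mp h0
    obtain ⟨a, ha⟩ := aux_centralizer hn1 Fn hv huF
    have hu2 : h' * (e₂ - e') - (e₂ - e') * h' = (2 : ℂ) • (e₂ - e') := by
      have h0 : h' * (e₂ - e') - (e₂ - e') * h'
          = (h' * e₂ - e₂ * h') - (h' * e' - e' * h') := by noncomm_ring
      rw [h0, ht1₂, hT1', ← smul_sub]
    have h9 : ∑ k : Fin n, ((2 : ℂ) * (k : ℕ) * a k - (-2) * a k) • F ^ (k : ℕ) = 0 := by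
      simp only [sub_smul]
      rw [Finset.sum_sub_distrib]
      have hA : ∑ k : Fin n, ((2 : ℂ) * (k : ℕ) * a k) • F ^ (k : ℕ)
          = (e₂ - e') * h' - h' * (e₂ - e') := by rw [← hbrack h' hT2' a, ← ha]
      have hB : ∑ k : Fin n, ((-2 : ℂ) * a k) • F ^ (k : ℕ) = (-2 : ℂ) • (e₂ - e') := by
        rw [ha, Finset.smul_sum]
        exact Finset.sum_congr rfl fun k _ => (smul_smul _ _ _).symm
      rw [hA, hB]
      have h10 : (e₂ - e') * h' - h' * (e₂ - e') = -(h' * (e₂ - e') - (e₂ - e') * h') := by abel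
      rw [h10, hu2, ← neg_smul]
      exact sub_self _
    have ha0 : ∀ k : Fin n, a k = 0 := by
      intro k
      have h11 := aux_matrix_indep Fn hv _ h9 k
      have h12 : ((2 : ℂ) * (k : ℕ) + 2) * a k = 0 := by linear_combination h11
      have hne : (2 : ℂ) * (k : ℕ) + 2 ≠ 0 := by
        have h13 : (2 : ℂ) * (k : ℕ) + 2 = 2 * ((((k : ℕ) + 1 : ℕ)) : ℂ) := by push_cast; ring
        rw [h13]
        exact mul_ne_zero two_ne_zero (Nat.cast_ne_zero.mpr (Nat.succ_ne_zero _))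
      exact (mul_eq_zero.mp h12).resolve_left hne
    have hu0 : e₂ - e' = 0 := by
      rw [ha]
      exact Finset.sum_eq_zero fun k _ => by rw [ha0 k, zero_smul]
    exact sub_eq_zero.mp hu0
  have goal_h : NormedSpace.exp z * h * (NormedSpace.exp z)⁻¹ = h' := by
    rw [← hE]; exact hconjh
  have goal_e : NormedSpace.exp z * e * (NormedSpace.exp z)⁻¹ = e' := by
    rw [← hE, ← he₂]; exact he₂e'
  refine ⟨z, ⟨hztr, hzF, goal_h, goal_e⟩, ?_⟩
  -- uniqueness of z
  intro z₁ hz₁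
  obtain ⟨htr₁, hzF₁, hconjh₁, -⟩ := hz₁
  obtain ⟨c₁, hc₁⟩ := aux_centralizer hn1 Fn hv hzF₁
  have hc₁0 : c₁ ⟨0, hn1⟩ = 0 := by
    have h9 : (n : ℂ) * c₁ ⟨0, hn1⟩ = 0 := by
      rw [← aux_trace_sum hn1 hFnil c₁, ← hc₁, htr₁]
    exact (mul_eq_zero.mp h9).resolve_left hnne
  have hc₁0' : ∀ k : Fin n, (k : ℕ) = 0 → c₁ k = 0 := by
    intro k hk
    have hkk : k = ⟨0, hn1⟩ := Fin.ext hk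
    rw [hkk]
    exact hc₁0
  have hz₁n : z₁ ^ n = 0 := by rw [hc₁]; exact aux_nilpotent_of_c0 Fn c₁ hc₁0'
  have hw₁ : z₁ * h - h * z₁ = ∑ k : Fin n, ((2 : ℂ) * (k : ℕ) * c₁ k) • F ^ (k : ℕ) := by
    rw [hc₁]
    exact hbrack h hT2 c₁
  have hcm : z₁ * (∑ k : Fin n, ((2 : ℂ) * (k : ℕ) * c₁ k) • F ^ (k : ℕ))
      = (∑ k : Fin n, ((2 : ℂ) * (k : ℕ) * c₁ k) • F ^ (k : ℕ)) * z₁ := by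
    rw [hc₁]
    exact aux_sums_commute F c₁ _
  have hE₁ := aux_exp_mul hz₁n hcm hw₁
  rw [hE₁, mul_assoc, (hexpinv z₁).1, mul_one] at hconjh₁
  have hsum : ∑ k : Fin n, ((2 : ℂ) * (k : ℕ) * c₁ k - d k) • F ^ (k : ℕ) = 0 := by
    simp only [sub_smul]
    rw [Finset.sum_sub_distrib, ← hd, ← hconjh₁]
    abel
  -- conclude z₁ = z
  rw [hc₁, hzdef]
  refine Finset.sum_congr rfl fun k _ => ?_
  congr 1
  have e1 : (2 : ℂ) * (k : ℕ) * c₁ k = d k :=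
    sub_eq_zero.mp (aux_matrix_indep Fn hv _ hsum k)
  by_cases hk : (k : ℕ) = 0
  · rw [hc₁0' k hk, hc0 k hk]
  · have hknz : ((k : ℕ) : ℂ) ≠ 0 := Nat.cast_ne_zero.mpr hk
    rw [hcval k hk, ← e1]
    field_simp
end

section
/- Let n ≥ 2, let N ∈ Matₙ(ℂ) be principal nilpotent, and let J, J′ ∈ Matₙ(ℂ) be invertible symmetric matrices with NᵀJ = JN and NᵀJ′ = J′N (i.e. the involutions σ_J and σ_{J′} both negate N). Then there exists a unique nilpotent matrix z ∈ Matₙ(ℂ) commuting with N such that σ_{J′}(X) = σ_J(exp(z)·X·exp(z)⁻¹) for all X ∈ Matₙ(ℂ). (Thus the exponentials of the nilpotent part of the centralizer of N act simply transitively on the involutions of this conjugacy class negating N.) -/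
open Matrix
open scoped Nat

section AuxLemmas

lemma exp_nilp_sum {n : ℕ} {z : Matrix (Fin n) (Fin n) ℂ} {m : ℕ} (h : z ^ m = 0) :
    NormedSpace.exp z = ∑ k ∈ Finset.range m, ((k ! : ℂ))⁻¹ • z ^ k := by
  rw [NormedSpace.exp_eq_tsum (𝕂 := ℂ)]
  refine tsum_eq_sum ?_
  intro k hk
  rw [pow_eq_zero_of_le (le_of_not_gt fun hlt => hk (Finset.mem_range.mpr hlt)) h, smul_zero]

end AuxLemmas


lemma centralizer_poly {n : ℕ} (hn : 0 < n) (N : Matrix (Fin n) (Fin n) ℂ)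
    (hNn : N ^ n = 0) (hN1 : N ^ (n-1) ≠ 0)
    (X : Matrix (Fin n) (Fin n) ℂ) (hX : X * N = N * X) :
    ∃ c : Fin n → ℂ, X = ∑ i : Fin n, c i • N ^ (i : ℕ) := by
  -- find a cyclic vector
  have hv : ∃ v : Fin n → ℂ, (N ^ (n-1)) *ᵥ v ≠ 0 := by
    by_contra h
    push_neg at h
    apply hN1
    ext i j
    have := congrFun (h (Pi.single j 1)) i
    simpa [Matrix.mulVec_single] using this
  obtain ⟨v, hv⟩ := hv
  set b : Fin n → (Fin n → ℂ) := fun i => (N ^ (i : ℕ)) *ᵥ v with hb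
  -- auxiliary computation
  have key : ∀ (c : Fin n → ℂ) (m : ℕ),
      (N ^ m) *ᵥ (∑ i : Fin n, c i • b i) = ∑ i : Fin n, c i • ((N ^ (m + (i:ℕ))) *ᵥ v) := by
    intro c m
    rw [show ∀ w, (N ^ m) *ᵥ w = (N ^ m).mulVecLin w from fun _ => rfl]
    rw [map_sum]
    refine Finset.sum_congr rfl fun i _ => ?_
    rw [_root_.map_smul]
    simp only [Matrix.mulVecLin_apply, hb, Matrix.mulVec_mulVec, ← pow_add]
  -- linear independence
  have li : LinearIndependent ℂ b := by
    rw [Fintype.linearIndependent_iff]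
    intro g hg
    suffices H : ∀ k : ℕ, k < n → ∀ (i : Fin n), (i:ℕ) = k → g i = 0 by
      intro i; exact H i i.2 i rfl
    intro k
    induction k using Nat.strong_induction_on with
    | _ k IH =>
      intro hk i hik
      have h2 : (N ^ (n - 1 - (i:ℕ))) *ᵥ (∑ j : Fin n, g j • b j) = 0 := by
        rw [hg, Matrix.mulVec_zero]
      rw [key] at h2
      have h3 : ∑ j : Fin n, g j • ((N ^ (n - 1 - (i:ℕ) + (j:ℕ))) *ᵥ v)
          = g i • ((N ^ (n-1)) *ᵥ v) := by
        rw [Finset.sum_eq_single i]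
        · have he : n - 1 - (i:ℕ) + (i:ℕ) = n - 1 := by have := i.2; omega
          rw [he]
        · intro j _ hji
          have hjine : (j:ℕ) ≠ (i:ℕ) := fun h => hji (Fin.ext h)
          rcases lt_or_gt_of_ne hjine with hlt | hgt
          · rw [IH j (by omega) (by omega) j rfl, zero_smul]
          · have : N ^ (n - 1 - (i:ℕ) + (j:ℕ)) = 0 := by
              apply pow_eq_zero_of_le _ hNn
              have := i.2; have := j.2; omega
            rw [this, Matrix.zero_mulVec, smul_zero]
        · intro h; exact absurd (Finset.mem_univ i) h
      rw [h3] at h2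
      rcases smul_eq_zero.mp h2 with h | h
      · exact h
      · exact absurd h hv
  -- basis
  have card_eq : Fintype.card (Fin n) = Module.finrank ℂ (Fin n → ℂ) := by
    simp [Module.finrank_fin_fun]
  have : Nonempty (Fin n) := ⟨⟨0, hn⟩⟩
  let B := basisOfLinearIndependentOfCardEqFinrank li card_eq
  have hB : ⇑B = b := coe_basisOfLinearIndependentOfCardEqFinrank li card_eq
  set c : Fin n → ℂ := fun i => B.repr (X *ᵥ v) i with hc
  have hXv : X *ᵥ v = ∑ i : Fin n, c i • b i := by
    conv_lhs => rw [← B.sum_repr (X *ᵥ v)]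
    simp [hB, hc]
  refine ⟨c, ?_⟩
  have hcomm : ∀ m : ℕ, X * N ^ m = N ^ m * X := fun m =>
    ((Commute.pow_right (hX : Commute X N) m))
  apply Matrix.toLin'.injective
  apply B.ext
  intro i
  rw [hB]
  have lhs : Matrix.toLin' X (b i) = ∑ j : Fin n, c j • ((N ^ ((i:ℕ) + (j:ℕ))) *ᵥ v) := by
    rw [Matrix.toLin'_apply]
    show X *ᵥ ((N ^ (i:ℕ)) *ᵥ v) = _
    rw [Matrix.mulVec_mulVec, hcomm, ← Matrix.mulVec_mulVec, hXv, key]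
  rw [lhs, map_sum, LinearMap.sum_apply]
  refine Finset.sum_congr rfl fun j _ => ?_
  rw [_root_.map_smul, LinearMap.smul_apply, Matrix.toLin'_apply]
  show _ = c j • ((N ^ (j:ℕ)) *ᵥ ((N ^ (i:ℕ)) *ᵥ v))
  rw [Matrix.mulVec_mulVec, ← pow_add, Nat.add_comm]

lemma exp_mem_adjoin {n : ℕ} {A₀ z : Matrix (Fin n) (Fin n) ℂ}
    (hz : z ∈ Algebra.adjoin ℂ {A₀}) (hnil : IsNilpotent z) :
    NormedSpace.exp z ∈ Algebra.adjoin ℂ {A₀} := by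
  obtain ⟨m, hm⟩ := hnil
  rw [exp_nilp_sum hm]
  exact Subalgebra.sum_mem _ fun k _ =>
    Subalgebra.smul_mem _ (Subalgebra.pow_mem _ hz k) _

lemma exists_exp_log {n : ℕ} (A₀ : Matrix (Fin n) (Fin n) ℂ) :
    ∀ (k : ℕ) (M : Matrix (Fin n) (Fin n) ℂ), M ∈ Algebra.adjoin ℂ {A₀} → M ^ k = 0 →
    ∃ z ∈ Algebra.adjoin ℂ {A₀}, IsNilpotent z ∧ NormedSpace.exp z = 1 + M := by
  have hcomm : ∀ x y : Matrix (Fin n) (Fin n) ℂ,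
      x ∈ Algebra.adjoin ℂ {A₀} → y ∈ Algebra.adjoin ℂ {A₀} → Commute x y :=
    fun x y hx hy => Algebra.commute_of_mem_adjoin_singleton_of_commute hy
      ((Algebra.commute_of_mem_adjoin_self hx).symm)
  intro k
  induction k using Nat.strong_induction_on with
  | _ k IH =>
    intro M hM hMk
    match k, hMk with
    | 0, hMk =>
      rw [pow_zero] at hMk
      have hM0 : M = 0 := by
        calc M = M * 1 := (mul_one M).symm
        _ = M * 0 := by rw [hMk]
        _ = 0 := mul_zero M
      exact ⟨0, zero_mem _, IsNilpotent.zero, by rw [NormedSpace.exp_zero, hM0, add_zero]⟩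
    | 1, hMk =>
      rw [pow_one] at hMk
      refine ⟨0, zero_mem _, IsNilpotent.zero, ?_⟩
      rw [NormedSpace.exp_zero, hMk, add_zero]
    | (k+2), hMk =>
      have hMnil : IsNilpotent M := ⟨k+2, hMk⟩
      have hnegM : (-M) ^ (k+4) = 0 := by
        rw [neg_pow, pow_eq_zero_of_le (by omega) hMk, mul_zero]
      set C : Matrix (Fin n) (Fin n) ℂ :=
        ∑ j ∈ Finset.range (k+2), (((2+j)! : ℂ))⁻¹ • (-M) ^ j with hC
      have hCmem : C ∈ Algebra.adjoin ℂ {A₀} :=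
        Subalgebra.sum_mem _ fun j _ =>
          Subalgebra.smul_mem _ (Subalgebra.pow_mem _ (neg_mem hM) j) _
      have hterm : ∀ j, ((j+1+1)! : ℂ)⁻¹ • (-M) ^ (j+1+1)
          = M^2 * ((((2+j)! : ℂ))⁻¹ • (-M)^j) := by
        intro j
        rw [show j+1+1 = 2+j by omega, pow_add, neg_sq, mul_smul_comm]
      have hexpneg : NormedSpace.exp (-M) = 1 - M + M^2 * C := by
        rw [exp_nilp_sum hnegM]
        rw [show k+4 = (k+2)+1+1 by ring]
        rw [Finset.sum_range_succ', Finset.sum_range_succ']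
        rw [Finset.sum_congr rfl (fun j _ => hterm j), ← Finset.mul_sum, ← hC]
        have h01 : (((0+1)! : ℕ) : ℂ)⁻¹ = 1 := by norm_num
        simp only [pow_zero, pow_one, Nat.factorial_zero, Nat.cast_one, inv_one,
          one_smul, h01]
        noncomm_ring
      set B : Matrix (Fin n) (Fin n) ℂ := NormedSpace.exp (-M) * (1 + M) - 1 with hBdef
      set D : Matrix (Fin n) (Fin n) ℂ := C + C * M - 1 with hD
      have hDmem : D ∈ Algebra.adjoin ℂ {A₀} := by
        apply sub_mem (add_mem hCmem (mul_mem hCmem hM)) (one_mem _)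
      have hB : B = M^2 * D := by
        rw [hBdef, hexpneg, hD]
        noncomm_ring
      have hBmem : B ∈ Algebra.adjoin ℂ {A₀} := by
        rw [hB]; exact mul_mem (pow_mem hM 2) hDmem
      have hBk : B ^ (k+1) = 0 := by
        rw [hB, (hcomm (M^2) D (pow_mem hM 2) hDmem).mul_pow, ← pow_mul,
          pow_eq_zero_of_le (by omega) hMk, zero_mul]
      obtain ⟨z₂, hz₂mem, hz₂nil, hz₂exp⟩ := IH (k+1) (by omega) B hBmem hBk
      refine ⟨M + z₂, add_mem hM hz₂mem, ?_, ?_⟩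
      · exact (hcomm M z₂ hM hz₂mem).isNilpotent_add hMnil hz₂nil
      · rw [Matrix.exp_add_of_commute M z₂ (hcomm M z₂ hM hz₂mem), hz₂exp,
          hBdef]
        rw [show (1 : Matrix (Fin n) (Fin n) ℂ) + (NormedSpace.exp (-M) * (1 + M) - 1)
          = NormedSpace.exp (-M) * (1 + M) by abel, ← mul_assoc,
          ← Matrix.exp_add_of_commute M (-M) (Commute.refl M).neg_right]
        simp [NormedSpace.exp_zero]



lemma exp_nilp_factor {n : ℕ} {w : Matrix (Fin n) (Fin n) ℂ} (h : IsNilpotent w) :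
    ∃ u : Matrix (Fin n) (Fin n) ℂ, Commute w u ∧ IsNilpotent (u - 1) ∧
      NormedSpace.exp w = 1 + w * u := by
  obtain ⟨m, hm⟩ := h
  set u : Matrix (Fin n) (Fin n) ℂ := ∑ k ∈ Finset.range (m+1), (((k+1)! : ℂ))⁻¹ • w ^ k
    with hu
  set s : Matrix (Fin n) (Fin n) ℂ := ∑ k ∈ Finset.range m, (((k+1+1)! : ℂ))⁻¹ • w ^ k
    with hs
  have hwu : Commute w u := by
    apply Finset.sum_induction _ (fun x => Commute w x)
      (fun a b => Commute.add_right) (Commute.zero_right w)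
    intro k _
    exact ((Commute.refl w).pow_right k).smul_right _
  have hws : Commute w s := by
    apply Finset.sum_induction _ (fun x => Commute w x)
      (fun a b => Commute.add_right) (Commute.zero_right w)
    intro k _
    exact ((Commute.refl w).pow_right k).smul_right _
  have hu1 : u - 1 = w * s := by
    rw [hu, Finset.sum_range_succ', hs, Finset.mul_sum]
    simp only [pow_zero, Nat.zero_add, Nat.factorial_one, Nat.cast_one, inv_one, one_smul]
    rw [add_sub_cancel_right]
    refine Finset.sum_congr rfl fun k _ => ?_
    rw [mul_smul_comm, pow_succ']
  refine ⟨u, hwu, ?_, ?_⟩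
  · rw [hu1]
    exact hws.isNilpotent_mul_right ⟨m, hm⟩
  · have hm2 : w ^ (m + 2) = 0 := pow_eq_zero_of_le (by omega) hm
    rw [exp_nilp_sum hm2, show m + 2 = (m+1)+1 by omega, Finset.sum_range_succ']
    simp only [pow_zero, Nat.factorial_zero, Nat.cast_one, inv_one, one_smul]
    rw [add_comm, hu, Finset.mul_sum]
    congr 1
    refine Finset.sum_congr rfl fun k _ => ?_
    rw [mul_smul_comm, pow_succ']


lemma exp_nilp_sub_one_nilpotent {n : ℕ} {w : Matrix (Fin n) (Fin n) ℂ} (h : IsNilpotent w) :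
    IsNilpotent (NormedSpace.exp w - 1) := by
  obtain ⟨u, hwu, hu1, hexp⟩ := exp_nilp_factor h
  rw [hexp, add_sub_cancel_left]
  exact hwu.isNilpotent_mul_right h

lemma trace_exp_nilp {n : ℕ} {w : Matrix (Fin n) (Fin n) ℂ} (h : IsNilpotent w) :
    Matrix.trace (NormedSpace.exp w) = (n : ℂ) := by
  have h1 := exp_nilp_sub_one_nilpotent h
  have h2 : Matrix.trace (NormedSpace.exp w - 1) = 0 :=
    (Matrix.isNilpotent_trace_of_isNilpotent h1).eq_zero
  rw [Matrix.trace_sub, Matrix.trace_one] at h2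
  simp only [Fintype.card_fin] at h2
  exact sub_eq_zero.mp h2

lemma exp_eq_one_iff_nilp {n : ℕ} {w : Matrix (Fin n) (Fin n) ℂ} (h : IsNilpotent w)
    (hexp : NormedSpace.exp w = 1) : w = 0 := by
  obtain ⟨u, hwu, hu1, hfac⟩ := exp_nilp_factor h
  rw [hfac] at hexp
  have hwu0 : w * u = 0 := by
    have := congrArg (fun X => X - 1) hexp
    simpa using this
  have huunit : IsUnit u := by
    have := hu1.isUnit_add_one
    simpa using this
  obtain ⟨v, hv⟩ := huunit
  calc w = w * (↑v * ↑v⁻¹) := by rw [Units.mul_inv, mul_one]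
  _ = (w * u) * ↑v⁻¹ := by rw [hv, mul_assoc]
  _ = 0 := by rw [hwu0, zero_mul]

/-- For an invertible symmetric matrix `J`, the involution `σ_J (X) = -J⁻¹ Xᵀ J` negates a
principal nilpotent matrix `N` iff `Nᵀ J = J N`.  The exponentials of the nilpotent part of
the centralizer of `N` act simply transitively on the involutions of this conjugacy class
negating `N`. -/
theorem involutions_negating_simply_transitive
    (n : ℕ) (hn : 2 ≤ n) (N J J' : Matrix (Fin n) (Fin n) ℂ)
    (hN : IsNilpotent N ∧ N ^ (n - 1) ≠ 0)
    (hJ : IsUnit J) (hJsymm : Jᵀ = J)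
    (hJ' : IsUnit J') (hJ'symm : J'ᵀ = J')
    (hNJ : Nᵀ * J = J * N) (hNJ' : Nᵀ * J' = J' * N) :
    ∃! z : Matrix (Fin n) (Fin n) ℂ,
      IsNilpotent z ∧ z * N = N * z ∧
      ∀ X : Matrix (Fin n) (Fin n) ℂ,
        -(J'⁻¹ * Xᵀ * J') =
          -(J⁻¹ * (NormedSpace.exp z * X * (NormedSpace.exp z)⁻¹)ᵀ * J) := by
  obtain ⟨hNnil, hN1⟩ := hN
  haveI : NeZero n := ⟨by omega⟩
  have hJd : IsUnit J.det := (Matrix.isUnit_iff_isUnit_det J).mp hJ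
  have hJ'd : IsUnit J'.det := (Matrix.isUnit_iff_isUnit_det J').mp hJ'
  have hn0 : 0 < n := by omega
  have hNn : N ^ n = 0 := by
    have h1 := Matrix.isNilpotent_charpoly_sub_pow_of_isNilpotent hNnil
    have h2 : N.charpoly = Polynomial.X ^ n := by
      have h3 := h1.eq_zero
      rw [sub_eq_zero] at h3
      simpa using h3
    have h4 := N.aeval_self_charpoly
    rw [h2] at h4
    simpa using h4
  -- the matrix A = J⁻¹ J' commutes with N
  set A : Matrix (Fin n) (Fin n) ℂ := J⁻¹ * J' with hAdef
  have hNJinv : N * J⁻¹ = J⁻¹ * Nᵀ := by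
    calc N * J⁻¹ = J⁻¹ * (J * N) * J⁻¹ := by
          rw [← mul_assoc, Matrix.nonsing_inv_mul _ hJd, one_mul]
    _ = J⁻¹ * (Nᵀ * J) * J⁻¹ := by rw [hNJ]
    _ = J⁻¹ * Nᵀ := by
          rw [mul_assoc, mul_assoc, Matrix.mul_nonsing_inv _ hJd, mul_one]
  have hAN : A * N = N * A := by
    rw [hAdef]
    calc J⁻¹ * J' * N = J⁻¹ * (Nᵀ * J') := by rw [mul_assoc, hNJ']
    _ = N * J⁻¹ * J' := by rw [← mul_assoc, ← hNJinv]
    _ = N * (J⁻¹ * J') := by rw [mul_assoc]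
  have hAunit : IsUnit A := by
    have hdet : A.det = (J.det)⁻¹ * J'.det := by
      rw [hAdef, Matrix.det_mul, Matrix.det_nonsing_inv, Ring.inverse_eq_inv']
    rw [Matrix.isUnit_iff_isUnit_det, hdet, isUnit_iff_ne_zero]
    exact mul_ne_zero (inv_ne_zero hJd.ne_zero) hJ'd.ne_zero
  -- A is a polynomial in N
  obtain ⟨c, hA⟩ := centralizer_poly hn0 N hNn hN1 A hAN
  set a₀ : ℂ := c 0 with ha₀def
  have hsplit : A - a₀ • (1 : Matrix (Fin n) (Fin n) ℂ)
      = ∑ i ∈ Finset.univ.erase (0 : Fin n), c i • N ^ (i : ℕ) := by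
    rw [hA, ← Finset.add_sum_erase Finset.univ (fun i => c i • N ^ (i:ℕ))
      (Finset.mem_univ (0 : Fin n))]
    simp [ha₀def]
  have hnilsum : IsNilpotent (A - a₀ • (1 : Matrix (Fin n) (Fin n) ℂ)) := by
    rw [hsplit]
    apply Commute.isNilpotent_sum
    · intro i hi
      have hipos : 0 < (i:ℕ) := by
        rcases Nat.eq_zero_or_pos (i:ℕ) with h0 | hp
        · exact absurd (Fin.ext (h0.trans (Fin.val_zero n).symm) : i = 0)
            (Finset.ne_of_mem_erase hi)
        · exact hp
      have hNi : IsNilpotent (N ^ (i:ℕ)) := by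
        refine ⟨n, ?_⟩
        rw [← pow_mul]
        exact pow_eq_zero_of_le (Nat.le_mul_of_pos_left n hipos) hNn
      exact hNi.smul _
    · intro i j _ _
      exact (((Commute.refl N).pow_pow _ _).smul_left _).smul_right _
  have ha₀ : a₀ ≠ 0 := by
    intro h0
    have hAnil : IsNilpotent A := by
      have h5 := hnilsum
      rw [h0, zero_smul, sub_zero] at h5
      exact h5
    exact hAnil.not_isUnit hAunit
  -- construct z with exp z = a₀⁻¹ • A
  set M : Matrix (Fin n) (Fin n) ℂ := a₀⁻¹ • A - 1 with hMdef
  have hMadj : M ∈ Algebra.adjoin ℂ {A} :=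
    sub_mem (Subalgebra.smul_mem _ (Algebra.self_mem_adjoin_singleton ℂ A) _) (one_mem _)
  have hMnil : IsNilpotent M := by
    have h6 : M = a₀⁻¹ • (A - a₀ • 1) := by
      rw [hMdef, smul_sub, smul_smul, inv_mul_cancel₀ ha₀, one_smul]
    rw [h6]
    exact hnilsum.smul _
  obtain ⟨m, hm⟩ := hMnil
  obtain ⟨z, hzadj, hznil, hzexp⟩ := exists_exp_log A m M hMadj hm
  have hexpz : NormedSpace.exp z = a₀⁻¹ • A := by
    rw [hzexp, hMdef]; abel
  have hzN : z * N = N * z := by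
    have h1 : Commute N A := hAN.symm
    exact ((Algebra.commute_of_mem_adjoin_singleton_of_commute hzadj h1).symm).eq
  have hPQ : (J⁻¹ * J') * (J'⁻¹ * J) = 1 := by
    rw [mul_assoc, ← mul_assoc J', Matrix.mul_nonsing_inv _ hJ'd, one_mul,
      Matrix.nonsing_inv_mul _ hJd]
  have hEinv : (NormedSpace.exp z)⁻¹ = a₀ • (J'⁻¹ * J) := by
    apply Matrix.inv_eq_right_inv
    rw [hexpz, hAdef, smul_mul_assoc, mul_smul_comm, smul_smul, inv_mul_cancel₀ ha₀,
      one_smul, hPQ]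
  -- the involution identity for z
  have hprop : ∀ X : Matrix (Fin n) (Fin n) ℂ,
      -(J'⁻¹ * Xᵀ * J') =
        -(J⁻¹ * (NormedSpace.exp z * X * (NormedSpace.exp z)⁻¹)ᵀ * J) := by
    intro X
    rw [hEinv, hexpz, hAdef]
    congr 1
    simp only [Matrix.transpose_mul, Matrix.transpose_smul, Matrix.transpose_nonsing_inv,
      hJsymm, hJ'symm, smul_mul_assoc, mul_smul_comm, smul_smul]
    rw [mul_inv_cancel₀ ha₀, one_smul]
    simp only [← mul_assoc]
    simp only [Matrix.nonsing_inv_mul _ hJd, one_mul,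
      Matrix.nonsing_inv_mul_cancel_right _ _ hJd]
  refine ⟨z, ⟨hznil, hzN, hprop⟩, ?_⟩
  rintro y ⟨hynil, hyN, hyprop⟩
  -- two-sided inverses of exponentials
  have hinv : ∀ w : Matrix (Fin n) (Fin n) ℂ,
      NormedSpace.exp w * (NormedSpace.exp w)⁻¹ = 1 ∧
      (NormedSpace.exp w)⁻¹ * NormedSpace.exp w = 1 := by
    intro w
    have h1 : NormedSpace.exp w * NormedSpace.exp (-w) = 1 := by
      rw [← Matrix.exp_add_of_commute w (-w) (Commute.refl w).neg_right, add_neg_cancel,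
        NormedSpace.exp_zero]
    have h2 : NormedSpace.exp (-w) * NormedSpace.exp w = 1 := by
      rw [← Matrix.exp_add_of_commute (-w) w (Commute.refl w).neg_left, neg_add_cancel,
        NormedSpace.exp_zero]
    rw [Matrix.exp_neg] at h1 h2
    exact ⟨h1, h2⟩
  set E₁ : Matrix (Fin n) (Fin n) ℂ := NormedSpace.exp y with hE₁
  set E₂ : Matrix (Fin n) (Fin n) ℂ := NormedSpace.exp z with hE₂
  have hi1 := hinv y
  have hi2 := hinv z
  have hcan : ∀ W : Matrix (Fin n) (Fin n) ℂ, J * (J⁻¹ * W * J) * J⁻¹ = W := by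
    intro W
    rw [← mul_assoc, Matrix.mul_nonsing_inv_cancel_left _ _ hJd,
      Matrix.mul_nonsing_inv_cancel_right _ _ hJd]
  have hconj : ∀ X : Matrix (Fin n) (Fin n) ℂ, E₁ * X * E₁⁻¹ = E₂ * X * E₂⁻¹ := by
    intro X
    have h := (hyprop X).symm.trans (hprop X)
    have h2 := neg_injective h
    have h3 := congrArg (fun W => J * W * J⁻¹) h2
    simp only [hcan] at h3
    have h4 := congrArg Matrix.transpose h3
    simpa [Matrix.transpose_transpose] using h4
  set P : Matrix (Fin n) (Fin n) ℂ := E₂⁻¹ * E₁ with hPdef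
  have key : ∀ X : Matrix (Fin n) (Fin n) ℂ, P * X = X * P := by
    intro X
    have h := hconj X
    have h' := congrArg (fun W => E₂⁻¹ * (W * E₁)) h
    simp only [← mul_assoc] at h'
    rw [mul_assoc (E₂⁻¹ * E₁ * X) E₁⁻¹ E₁, hi1.2, mul_one] at h'
    rw [hi2.2, one_mul, mul_assoc] at h'
    calc P * X = E₂⁻¹ * (E₁ * X) := by rw [hPdef, mul_assoc]
    _ = X * E₂⁻¹ * E₁ := h'
    _ = X * P := by rw [hPdef, mul_assoc]
  obtain ⟨r, hr⟩ := Matrix.mem_range_scalar_of_commute_single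
    (fun i j _ => ((key (Matrix.single i j 1)).symm : Commute _ P))
  have hPr : P = r • (1 : Matrix (Fin n) (Fin n) ℂ) := by
    rw [← hr]
    ext i j
    by_cases hij : i = j <;> simp [Matrix.scalar_apply, Matrix.one_apply, hij]
  have hE1r : E₁ = r • E₂ := by
    have h5 : E₂ * P = E₁ := by
      rw [hPdef, ← mul_assoc, hi2.1, one_mul]
    rw [← h5, hPr, mul_smul_comm, mul_one]
  have hr1 : r = 1 := by
    have ht1 : Matrix.trace E₁ = (n : ℂ) := trace_exp_nilp hynil
    have ht2 : Matrix.trace E₂ = (n : ℂ) := trace_exp_nilp hznil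
    have ht3 : Matrix.trace E₁ = r * (n : ℂ) := by
      rw [hE1r, Matrix.trace_smul, ht2, smul_eq_mul]
    have hne : (n : ℂ) ≠ 0 := Nat.cast_ne_zero.mpr (by omega)
    have h7 : r * (n : ℂ) = 1 * (n : ℂ) := by rw [one_mul, ← ht3, ht1]
    exact mul_right_cancel₀ hne h7
  have hE1E2 : E₁ = E₂ := by rw [hE1r, hr1, one_smul]
  -- y and z commute
  obtain ⟨d, hd⟩ := centralizer_poly hn0 N hNn hN1 y hyN
  obtain ⟨e, he⟩ := centralizer_poly hn0 N hNn hN1 z hzN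
  have hyz : Commute y z := by
    rw [hd, he]
    refine Commute.sum_left _ _ _ fun i _ => ?_
    refine Commute.sum_right _ _ _ fun j _ => ?_
    exact (((Commute.refl N).pow_pow _ _).smul_left _).smul_right _
  have hdiff : IsNilpotent (y - z) := hyz.isNilpotent_sub hynil hznil
  have hexpdiff : NormedSpace.exp (y - z) = 1 := by
    rw [sub_eq_add_neg, Matrix.exp_add_of_commute y (-z) hyz.neg_right, Matrix.exp_neg]
    rw [← hE₁, ← hE₂, hE1E2]
    exact hi2.1
  have hzero := exp_eq_one_iff_nilp hdiff hexpdiff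
  exact sub_eq_zero.mp hzero
end

section
/- Let n ≥ 2, let N ∈ Matₙ(ℂ) be principal nilpotent and let M ∈ Matₙ(ℂ) be traceless with MN = NM. Then: (i) there exist unique complex numbers μ₂, μ₃, …, μₙ such that M = μ₂·N + μ₃·N² + ⋯ + μₙ·N^(n−1); and (ii) with these coefficients, one has ((v·N + conj(v)·M)^(n−1) ≠ 0 for every nonzero v ∈ ℂ) if and only if |μ₂| ≠ 1. -/
open Matrix Polynomial

lemma nilp_pow_card {n : ℕ} {N : Matrix (Fin n) (Fin n) ℂ} (h : IsNilpotent N) :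
    N ^ n = 0 := by
  have h1 := Matrix.isNilpotent_charpoly_sub_pow_of_isNilpotent h
  have h2 : N.charpoly = X ^ n := by
    have h3 := h1.eq_zero
    rw [sub_eq_zero] at h3
    simpa using h3
  have h4 := N.aeval_self_charpoly
  rwa [h2, map_pow, aeval_X] at h4

lemma nilp_trace {n : ℕ} {A : Matrix (Fin n) (Fin n) ℂ} (h : IsNilpotent A) :
    A.trace = 0 :=
  (Matrix.isNilpotent_trace_of_isNilpotent h).eq_zero

lemma pow_trace_zero {n : ℕ} {N : Matrix (Fin n) (Fin n) ℂ} (h : N ^ n = 0)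
    (k : ℕ) (hk : 1 ≤ k) : (N ^ k).trace = 0 := by
  apply nilp_trace
  refine ⟨n, ?_⟩
  obtain ⟨r, hr⟩ : ∃ r, k * n = n + r :=
    ⟨k * n - n, by have := Nat.le_mul_of_pos_left n (by omega : 0 < k); omega⟩
  rw [← pow_mul, hr, pow_add, h, zero_mul]

lemma mulVec_sum' {n : ℕ} {ι : Type*} (s : Finset ι) (A : Matrix (Fin n) (Fin n) ℂ)
    (f : ι → (Fin n → ℂ)) : A *ᵥ (∑ i ∈ s, f i) = ∑ i ∈ s, A *ᵥ f i := by
  have := map_sum A.mulVecLin f s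
  simpa only [Matrix.mulVecLin_apply] using this

lemma sum_smul_mulVec {n : ℕ} {ι : Type*} [Fintype ι] (c : ι → ℂ)
    (A : ι → Matrix (Fin n) (Fin n) ℂ) (x : Fin n → ℂ) :
    (∑ i, c i • A i) *ᵥ x = ∑ i, c i • (A i *ᵥ x) := by
  rw [← Matrix.toLin'_apply, map_sum, LinearMap.sum_apply]
  refine Finset.sum_congr rfl fun i _ => ?_
  rw [_root_.map_smul, LinearMap.smul_apply, Matrix.toLin'_apply]

lemma aux_li {m : ℕ} {N : Matrix (Fin (m+2)) (Fin (m+2)) ℂ}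
    (hNn : N ^ (m+2) = 0) {x : Fin (m+2) → ℂ} (hx : (N ^ (m+1)) *ᵥ x ≠ 0) :
    LinearIndependent ℂ (fun i : Fin (m+2) => (N ^ (i:ℕ)) *ᵥ x) := by
  rw [Fintype.linearIndependent_iff]
  intro g hg
  suffices H : ∀ k : ℕ, ∀ i : Fin (m+2), (i:ℕ) < k → g i = 0 by
    intro i; exact H (m+2) i i.isLt
  intro k
  induction k with
  | zero => intro i hi; omega
  | succ k ih =>
    intro i hi
    rcases Nat.lt_or_ge (i:ℕ) k with h | h
    · exact ih i h
    have hik : (i:ℕ) = k := by omega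
    have h1 := congrArg (N ^ (m + 1 - (i:ℕ))).mulVecLin hg
    rw [map_sum, map_zero] at h1
    simp only [Matrix.mulVecLin_apply] at h1
    simp only [Matrix.mulVec_smul, Matrix.mulVec_mulVec, ← pow_add] at h1
    rw [Finset.sum_eq_single i] at h1
    · have he : m + 1 - (i:ℕ) + (i:ℕ) = m + 1 := by have := i.isLt; omega
      rw [he] at h1
      rcases smul_eq_zero.mp h1 with h' | h'
      · exact h'
      · exact absurd h' hx
    · intro j _ hji
      rcases lt_trichotomy (j:ℕ) (i:ℕ) with h' | h' | h'
      · rw [ih j (by omega), zero_smul]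
      · exact absurd (Fin.ext h') hji
      · have hz : N ^ (m + 1 - (i:ℕ) + (j:ℕ)) = 0 := by
          have hil := i.isLt; have hjl := j.isLt
          have h2 : m + 1 - (i:ℕ) + (j:ℕ) = (m+2) + (m + 1 - (i:ℕ) + (j:ℕ) - (m+2)) := by
            omega
          rw [h2, pow_add, hNn, zero_mul]
        rw [hz, Matrix.zero_mulVec, smul_zero]
    · intro hmem; exact absurd (Finset.mem_univ i) hmem

/-- For `N` principal nilpotent of size `n ≥ 2` and `M` traceless commuting with `N`:
(i) there are unique coefficients `μ₂, …, μₙ` with `M = μ₂ N + μ₃ N² + ⋯ + μₙ N^(n-1)`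
(here `μ i` encodes `μ_(i+2)`, the coefficient of `N^(i+1)`); and (ii) with these
coefficients, `(v N + conj v M)^(n-1) ≠ 0` for all nonzero `v : ℂ` iff `|μ₂| ≠ 1`. -/
theorem exists_unique_higher_beltrami
    (n : ℕ) (hn : 2 ≤ n) (N M : Matrix (Fin n) (Fin n) ℂ)
    (hN : IsNilpotent N ∧ N ^ (n - 1) ≠ 0)
    (hM : M.trace = 0) (hcomm : M * N = N * M) :
    (∃! μ : Fin (n - 1) → ℂ, M = ∑ i : Fin (n - 1), μ i • N ^ ((i : ℕ) + 1)) ∧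
    ∀ μ : Fin (n - 1) → ℂ, M = ∑ i : Fin (n - 1), μ i • N ^ ((i : ℕ) + 1) →
      ((∀ v : ℂ, v ≠ 0 → (v • N + (starRingEnd ℂ) v • M) ^ (n - 1) ≠ 0) ↔
        ‖μ ⟨0, by omega⟩‖ ≠ 1) := by
  obtain ⟨hnil, hpow⟩ := hN
  obtain ⟨m, rfl⟩ : ∃ m, n = m + 2 := ⟨n - 2, by omega⟩
  show (∃! μ : Fin (m+1) → ℂ, M = ∑ i : Fin (m+1), μ i • N ^ ((i : ℕ) + 1)) ∧
    ∀ μ : Fin (m+1) → ℂ, M = ∑ i : Fin (m+1), μ i • N ^ ((i : ℕ) + 1) →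
      ((∀ v : ℂ, v ≠ 0 → (v • N + (starRingEnd ℂ) v • M) ^ (m+1) ≠ 0) ↔
        ‖μ ⟨0, by omega⟩‖ ≠ 1)
  have hpow : N ^ (m + 1) ≠ 0 := hpow
  have hNn : N ^ (m + 2) = 0 := nilp_pow_card hnil
  have hMN : Commute M N := hcomm
  -- cyclic vector
  obtain ⟨x, hx⟩ : ∃ x : Fin (m+2) → ℂ, (N ^ (m+1)) *ᵥ x ≠ 0 := by
    by_contra hcon
    push_neg at hcon
    apply hpow
    ext i j
    have h := congrFun (hcon (Pi.single j 1)) i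
    simpa [Matrix.mulVec_single] using h
  have hli := aux_li hNn hx
  have hcard : Fintype.card (Fin (m+2)) = Module.finrank ℂ (Fin (m+2) → ℂ) := by simp
  set B := basisOfLinearIndependentOfCardEqFinrank hli hcard with hBdef
  have hB : ∀ i, B i = (N ^ (i:ℕ)) *ᵥ x := fun i =>
    congrFun (coe_basisOfLinearIndependentOfCardEqFinrank hli hcard) i
  set c : Fin (m+2) → ℂ := fun i => B.repr (M *ᵥ x) i with hcdef
  have hMx : M *ᵥ x = ∑ i : Fin (m+2), c i • ((N ^ (i:ℕ)) *ᵥ x) := by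
    conv_lhs => rw [← B.sum_repr (M *ᵥ x)]
    exact Finset.sum_congr rfl fun i _ => by rw [hB]
  have hMeq : M = ∑ i : Fin (m+2), c i • N ^ (i:ℕ) := by
    have hlin : Matrix.toLin' M = Matrix.toLin' (∑ i : Fin (m+2), c i • N ^ (i:ℕ)) := by
      apply B.ext
      intro j
      rw [Matrix.toLin'_apply, Matrix.toLin'_apply, hB,
        Matrix.mulVec_mulVec, (hMN.pow_right (j:ℕ)).eq, ← Matrix.mulVec_mulVec, hMx,
        sum_smul_mulVec]
      rw [mulVec_sum']
      refine Finset.sum_congr rfl fun i _ => ?_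
      rw [Matrix.mulVec_smul, Matrix.mulVec_mulVec, Matrix.mulVec_mulVec,
        ← pow_add, ← pow_add, Nat.add_comm (j:ℕ) (i:ℕ)]
    exact Matrix.toLin'.injective hlin
  have hc0 : c 0 = 0 := by
    have ht : (∑ i : Fin (m+2), c i • N ^ (i:ℕ)).trace = 0 := by rw [← hMeq]; exact hM
    rw [Matrix.trace_sum] at ht
    simp only [Matrix.trace_smul] at ht
    rw [Fin.sum_univ_succ] at ht
    have hz : ∀ i : Fin (m+1),
        c i.succ • (N ^ ((i.succ : Fin (m+2)) : ℕ)).trace = 0 := fun i => by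
      rw [pow_trace_zero hNn _ (by simp [Fin.val_succ]), smul_zero]
    rw [Finset.sum_congr rfl fun i _ => hz i] at ht
    simp only [Finset.sum_const_zero, add_zero, Fin.val_zero, pow_zero,
      Matrix.trace_one, smul_eq_mul] at ht
    have hcast : ((Fintype.card (Fin (m+2)) : ℕ) : ℂ) ≠ 0 := by
      rw [Fintype.card_fin]
      exact Nat.cast_ne_zero.mpr (by omega)
    exact (mul_eq_zero.mp ht).resolve_right hcast
  set μ0 : Fin (m+1) → ℂ := fun i => c i.succ with hμ0
  have hMsum : M = ∑ i : Fin (m+1), μ0 i • N ^ ((i:ℕ)+1) := by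
    rw [hMeq, Fin.sum_univ_succ, hc0]
    simp [Fin.val_succ]
    rfl
  have huniq : ∀ μ' : Fin (m+1) → ℂ,
      M = ∑ i : Fin (m+1), μ' i • N ^ ((i:ℕ)+1) → μ' = μ0 := by
    intro μ' hμ'
    funext i
    have h1 : (∑ i : Fin (m+1), μ' i • N ^ ((i:ℕ)+1)) *ᵥ x
        = (∑ i : Fin (m+1), μ0 i • N ^ ((i:ℕ)+1)) *ᵥ x := by rw [← hμ', ← hMsum]
    rw [sum_smul_mulVec, sum_smul_mulVec] at h1
    have hdiff : ∑ j : Fin (m+2),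
        (Fin.cases 0 (fun i => μ' i - μ0 i) j : ℂ) • ((N ^ (j:ℕ)) *ᵥ x) = 0 := by
      rw [Fin.sum_univ_succ]
      simp only [Fin.cases_zero, Fin.cases_succ, zero_smul, zero_add, Fin.val_succ]
      simp only [sub_smul, Finset.sum_sub_distrib]
      rw [sub_eq_zero]
      exact h1
    have h2 := Fintype.linearIndependent_iff.mp hli _ hdiff i.succ
    simpa [sub_eq_zero] using h2
  constructor
  · exact ⟨μ0, hMsum, huniq⟩
  · intro μ hμ
    have h00 : (⟨0, by omega⟩ : Fin (m+1)) = 0 := rfl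
    rw [h00]
    have key : ∀ v : ℂ, (v • N + (starRingEnd ℂ) v • M) ^ (m+1)
        = (v + (starRingEnd ℂ) v * μ 0) ^ (m+1) • N ^ (m+1) := by
      intro v
      set vb := (starRingEnd ℂ) v with hvb
      set cc := v + vb * μ 0 with hcc
      set t : ℂ[X] := C vb * ∑ i : Fin m, C (μ i.succ) * X ^ (i:ℕ) with ht
      set r : ℂ[X] := C v + C vb * ∑ i : Fin (m+1), C (μ i) * X ^ (i:ℕ) with hr
      have hS : (∑ i : Fin m, C (μ i.succ) * X ^ ((i:ℕ)+1) : ℂ[X])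
          = X * ∑ i : Fin m, C (μ i.succ) * X ^ (i:ℕ) := by
        rw [Finset.mul_sum]
        exact Finset.sum_congr rfl fun i _ => by ring
      have hrct : r = C cc + X * t := by
        rw [hr, ht, hcc, Fin.sum_univ_succ]
        simp only [Fin.val_zero, pow_zero, mul_one, Fin.val_succ, map_add, _root_.map_mul]
        rw [hS]
        ring
      have haevalr : (aeval N) r
          = v • (1 : Matrix (Fin (m+2)) (Fin (m+2)) ℂ)
            + vb • ∑ i : Fin (m+1), μ i • N ^ (i:ℕ) := by
        rw [hr]
        simp only [map_add, _root_.map_mul, map_sum, map_pow, aeval_C, aeval_X,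
          Algebra.algebraMap_eq_smul_one, smul_mul_assoc, one_mul, Finset.smul_sum]
      have hqM : (aeval N) (X * r) = v • N + vb • M := by
        rw [_root_.map_mul, aeval_X, haevalr, hμ]
        rw [mul_add, mul_smul_comm, mul_one, mul_smul_comm, Finset.mul_sum]
        congr 1
        refine congrArg _ (Finset.sum_congr rfl fun i _ => ?_)
        rw [mul_smul_comm, ← pow_succ']
      obtain ⟨u, hu⟩ := sub_dvd_pow_sub_pow r (C cc) (m+1)
      have hrsub : r - C cc = X * t := by rw [hrct]; ring
      have hrpow : r ^ (m+1) = C (cc ^ (m+1)) + X * t * u := by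
        have h3 : r ^ (m+1) = (C cc)^(m+1) + (X*t)*u := by rw [← hrsub, ← hu]; ring
        rw [h3, map_pow]
      have hq : (X*r)^(m+1) = C (cc^(m+1)) * X^(m+1) + X^(m+2) * (t*u) := by
        rw [mul_pow, hrpow]; ring
      calc (v • N + vb • M) ^ (m+1) = (aeval N) ((X*r)^(m+1)) := by rw [map_pow, hqM]
        _ = cc ^ (m+1) • N ^ (m+1) := by
          rw [hq]
          simp only [map_add, _root_.map_mul, map_pow, aeval_C, aeval_X, hNn,
            Algebra.algebraMap_eq_smul_one, _root_.smul_pow, one_pow, smul_mul_assoc,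
            one_mul, zero_mul, add_zero]
    constructor
    · intro hall
      intro habs
      obtain ⟨w, hw⟩ := IsAlgClosed.exists_pow_nat_eq (-(μ 0)) (n := 2) two_pos
      have habs0 : ‖μ 0‖ = 1 := habs
      have hw0 : w ≠ 0 := by
        intro h
        rw [h] at hw
        simp only [ne_eq, OfNat.ofNat_ne_zero, not_false_eq_true, zero_pow] at hw
        rw [← neg_eq_iff_eq_neg] at hw
        rw [← hw] at habs0
        simp at habs0
      have hww : w * (starRingEnd ℂ) w = 1 := by
        have h1 : ‖w‖ ^ 2 = 1 := by
          rw [← norm_pow, hw, norm_neg, habs0]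
        rw [Complex.mul_conj]
        rw [← Complex.sq_norm, h1]
        norm_num
      have hcc0 : w + (starRingEnd ℂ) w * μ 0 = 0 := by
        have h2 : w * (w + (starRingEnd ℂ) w * μ 0) = 0 := by
          have hsq : w * w = -(μ 0) := by rw [← sq]; exact hw
          calc w * (w + (starRingEnd ℂ) w * μ 0)
              = w * w + (w * (starRingEnd ℂ) w) * μ 0 := by ring
            _ = -(μ 0) + 1 * μ 0 := by rw [hsq, hww]
            _ = 0 := by ring
        exact (mul_eq_zero.mp h2).resolve_left hw0
      apply hall w hw0
      rw [key w, hcc0]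
      simp
    · intro habs v hv
      rw [key v]
      have hcc : v + (starRingEnd ℂ) v * μ 0 ≠ 0 := by
        intro h0
        apply habs
        have h1 : v = -((starRingEnd ℂ) v * μ 0) := eq_neg_of_add_eq_zero_left h0
        have h2 := congrArg (‖·‖) h1
        rw [norm_neg, norm_mul, Complex.norm_conj] at h2
        have hva : ‖v‖ ≠ 0 := by simpa using hv
        have h3 : ‖v‖ * 1 = ‖v‖ * ‖μ 0‖ := by
          rw [mul_one]; exact h2
        exact (mul_left_cancel₀ hva h3).symm
      intro hz
      rcases smul_eq_zero.mp hz with h | h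
      · exact pow_ne_zero _ hcc h
      · exact hpow h
end

section
/- Let L be a finite-dimensional simple Lie algebra over ℂ with Killing form κ, and let (Φ1, Φ2) be a pair of elements of L with Φ1 principal nilpotent and ⁅Φ1, Φ2⁆ = 0. Then the subspace V = {(a, b) ∈ L × L : a ∈ range(ad Φ1) and ⁅Φ1, b⁆ = ⁅Φ2, a⁆} is isotropic for the pairing ω((a, b), (a′, b′)) = κ(a, b′) − κ(b, a′): for all (a, b) and (a′, b′) in V one has κ(a, b′) = κ(b, a′). -/
/-- An element `F` of a finite-dimensional complex Lie algebra is *principal nilpotent*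
if `ad F` is a nilpotent endomorphism and the centralizer `ker (ad F)` has dimension
equal to the rank of the Lie algebra (the common dimension of the Cartan subalgebras). -/
def IsPrincipalNilpotent (L : Type*) [LieRing L] [LieAlgebra ℂ L]
    [Module.Finite ℂ L] (F : L) : Prop :=
  IsNilpotent (LieAlgebra.ad ℂ L F) ∧
    Module.finrank ℂ (LinearMap.ker (LieAlgebra.ad ℂ L F)) = LieAlgebra.rank ℂ L

/-- The variation space `V = {(a,b) : a ∈ Im(ad Φ1), ⁅Φ1, b⁆ = ⁅Φ2, a⁆}` is isotropic
for the pairing `ω((a,b),(a',b')) = κ(a,b') - κ(b,a')` built from the Killing form `κ`: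
for all `(a, b)` and `(a', b')` in `V` one has `κ(a, b') = κ(b, a')`. -/
theorem var_isotropic
    {L : Type*} [LieRing L] [LieAlgebra ℂ L] [FiniteDimensional ℂ L]
    [LieAlgebra.IsSimple ℂ L] (Φ1 Φ2 : L)
    (h1 : IsPrincipalNilpotent L Φ1) (hc : ⁅Φ1, Φ2⁆ = 0) :
    ∀ a b a' b' : L,
      a ∈ LinearMap.range ((LieAlgebra.ad ℂ L Φ1) : L →ₗ[ℂ] L) →
      ⁅Φ1, b⁆ = ⁅Φ2, a⁆ →
      a' ∈ LinearMap.range ((LieAlgebra.ad ℂ L Φ1) : L →ₗ[ℂ] L) →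
      ⁅Φ1, b'⁆ = ⁅Φ2, a'⁆ →
      killingForm ℂ L a b' = killingForm ℂ L b a' := by
  intro a b a' b' ha hb ha' hb'
  obtain ⟨x, hx⟩ := ha
  obtain ⟨x', hx'⟩ := ha'
  simp only [LieAlgebra.ad_apply] at hx hx'
  subst hx hx'
  set B := killingForm ℂ L with hB
  have h_inv : ∀ u v w : L, B ⁅u, v⁆ w = B u ⁅v, w⁆ := fun u v w ↦
    LieModule.traceForm_apply_lie_apply ℂ L L u v w
  have h_comm : ∀ u v : L, B u v = B v u := fun u v ↦
    LieModule.traceForm_comm ℂ L L u v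
  -- LHS = -B ⁅x,Φ2⁆ ⁅Φ1,x'⁆
  have hLHS : B ⁅Φ1, x⁆ b' = - B ⁅⁅Φ1, x'⁆, x⁆ Φ2 := by
    calc B ⁅Φ1, x⁆ b' = - B ⁅x, Φ1⁆ b' := by rw [← lie_skew x Φ1, map_neg]; simp
      _ = - B x ⁅Φ1, b'⁆ := by rw [h_inv]
      _ = - B x ⁅Φ2, ⁅Φ1, x'⁆⁆ := by rw [hb']
      _ = - B ⁅x, Φ2⁆ ⁅Φ1, x'⁆ := by rw [h_inv]
      _ = - B ⁅Φ1, x'⁆ ⁅x, Φ2⁆ := by rw [h_comm]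
      _ = - B ⁅⁅Φ1, x'⁆, x⁆ Φ2 := congrArg Neg.neg (h_inv _ _ _).symm
  have hRHS : B b ⁅Φ1, x'⁆ = - B ⁅⁅Φ1, x⁆, x'⁆ Φ2 := by
    calc B b ⁅Φ1, x'⁆ = B ⁅Φ1, x'⁆ b := by rw [h_comm]
      _ = - B ⁅x', Φ1⁆ b := by rw [← lie_skew x' Φ1, map_neg]; simp
      _ = - B x' ⁅Φ1, b⁆ := by rw [h_inv]
      _ = - B x' ⁅Φ2, ⁅Φ1, x⁆⁆ := by rw [hb]
      _ = - B ⁅x', Φ2⁆ ⁅Φ1, x⁆ := by rw [h_inv]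
      _ = - B ⁅Φ1, x⁆ ⁅x', Φ2⁆ := by rw [h_comm]
      _ = - B ⁅⁅Φ1, x⁆, x'⁆ Φ2 := congrArg Neg.neg (h_inv _ _ _).symm
  rw [hLHS, hRHS, neg_inj]
  have hdiff : ⁅⁅Φ1, x'⁆, x⁆ = ⁅⁅Φ1, x⁆, x'⁆ + ⁅Φ1, ⁅x', x⁆⁆ := by
    have := leibniz_lie Φ1 x' x
    rw [this]
    rw [← lie_skew x' ⁅Φ1, x⁆]
    abel
  rw [hdiff, map_add, LinearMap.add_apply]
  have hzero : B ⁅Φ1, ⁅x', x⁆⁆ Φ2 = 0 := by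
    rw [hB, LieModule.traceForm_apply_lie_apply', hc]
    simp
  rw [hzero, add_zero]
end

section
/- Let n ≥ 2 and let (Φ1, Φ2) be a positive commuting pair of traceless matrices in Matₙ(ℂ) with Φ1 principal nilpotent. Let sl denote the space of traceless matrices in Matₙ(ℂ). Then sl × sl is the internal direct sum of the four subspaces V₁ = {(⁅Φ1, X⁆, ⁅Φ2, X⁆) : X ∈ sl}, V₂ = {(⁅Φ2ᴴ, Y⁆, ⁅Φ1ᴴ, Y⁆) : Y ∈ sl}, V₃ = {(0, C) : C ∈ sl, ⁅Φ1, C⁆ = 0 and ⁅Φ2, C⁆ = 0}, and V₄ = {(D, 0) : D ∈ sl, ⁅Φ1ᴴ, D⁆ = 0 and ⁅Φ2ᴴ, D⁆ = 0}; that is, every pair (a, b) of traceless matrices has a unique decomposition as a sum of elements of V₁, V₂, V₃, V₄. -/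
open Matrix

/-- A commuting pair `(Φ1, Φ2)` of traceless matrices with `Φ1` principal nilpotent is
*positive* if `‖⁅Φ2, X⁆‖_F < ‖⁅Φ1, X⁆‖_F` whenever `⁅Φ1, X⁆ ≠ 0`; the Frobenius norms
are compared via their squares `Re tr(XᴴX)`. -/
def IsPositivePair {n : ℕ} (Φ1 Φ2 : Matrix (Fin n) (Fin n) ℂ) : Prop :=
  ∀ X : Matrix (Fin n) (Fin n) ℂ, Φ1 * X - X * Φ1 ≠ 0 →
    ((Φ2 * X - X * Φ2)ᴴ * (Φ2 * X - X * Φ2)).trace.re <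
      ((Φ1 * X - X * Φ1)ᴴ * (Φ1 * X - X * Φ1)).trace.re

namespace FourFold
open Module

variable {n : ℕ}

abbrev Mat (n : ℕ) := Matrix (Fin n) (Fin n) ℂ

noncomputable def ad (M : Mat n) : Mat n →ₗ[ℂ] Mat n :=
  LinearMap.mulLeft ℂ M - LinearMap.mulRight ℂ M

lemma ad_apply (M X : Mat n) : ad M X = M * X - X * M := rfl

noncomputable def ip (A B : Mat n) : ℝ := ((Aᴴ * B).trace).re

lemma trace_adjoint (M X Y : Mat n) :
    (((M * X - X * M)ᴴ) * Y).trace = (Xᴴ * (Mᴴ * Y - Y * Mᴴ)).trace := by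
  rw [conjTranspose_sub, conjTranspose_mul, conjTranspose_mul, Matrix.sub_mul,
    Matrix.mul_sub, trace_sub, trace_sub, Matrix.mul_assoc, Matrix.mul_assoc,
    ← Matrix.mul_assoc Xᴴ Y Mᴴ, trace_mul_comm Mᴴ]

lemma ip_adjoint (M X Y : Mat n) : ip (ad M X) Y = ip X (ad Mᴴ Y) := by
  unfold ip
  rw [ad_apply, ad_apply, trace_adjoint]

lemma ip_symm (A B : Mat n) : ip A B = ip B A := by
  unfold ip
  have h : Bᴴ * A = (Aᴴ * B)ᴴ := by simp [conjTranspose_mul]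
  rw [h, trace_conjTranspose]
  simp

noncomputable def toE (A : Mat n) : EuclideanSpace ℂ (Fin n × Fin n) :=
  (WithLp.equiv 2 _).symm (fun p => A p.1 p.2)

lemma inner_toE (A B : Mat n) : (inner ℂ (toE A) (toE B) : ℂ) = (Aᴴ * B).trace := by
  simp only [toE, PiLp.inner_apply, RCLike.inner_apply, WithLp.equiv_symm_apply, PiLp.toLp_apply,
    Matrix.trace, Matrix.diag, Matrix.mul_apply, Matrix.conjTranspose_apply]
  rw [Fintype.sum_prod_type]
  rw [Finset.sum_comm]
  exact Finset.sum_congr rfl fun _ _ => Finset.sum_congr rfl fun _ _ => mul_comm _ _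

lemma ip_eq (A B : Mat n) : ip A B = (inner ℂ (toE A) (toE B) : ℂ).re := by
  rw [inner_toE]; rfl

lemma toE_eq_zero {A : Mat n} (h : toE A = 0) : A = 0 := by
  ext i j
  have := congrFun (congrArg (WithLp.equiv 2 _) h) (i, j)
  simpa [toE] using this

lemma ip_self_nonneg (A : Mat n) : 0 ≤ ip A A := by
  rw [ip_eq]
  simpa using inner_self_nonneg (𝕜 := ℂ) (x := toE A)

lemma ip_self_eq_zero {A : Mat n} (h : ip A A = 0) : A = 0 := by
  apply toE_eq_zero
  rw [← inner_self_eq_zero (𝕜 := ℂ)]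
  have him : (inner ℂ (toE A) (toE A) : ℂ).im = 0 := by simpa using inner_self_im (𝕜 := ℂ) (toE A)
  rw [ip_eq] at h
  exact Complex.ext h him

lemma ip_cauchy_schwarz (A B : Mat n) : (ip A B) ^ 2 ≤ ip A A * ip B B := by
  rw [ip_eq, ip_eq, ip_eq]
  have h1 : ((inner ℂ (toE A) (toE B) : ℂ).re) ^ 2 ≤ ‖(inner ℂ (toE A) (toE B) : ℂ)‖ ^ 2 := by
    calc ((inner ℂ (toE A) (toE B) : ℂ).re) ^ 2 = |(inner ℂ (toE A) (toE B) : ℂ).re| ^ 2 := (sq_abs _).symm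
      _ ≤ ‖(inner ℂ (toE A) (toE B) : ℂ)‖ ^ 2 := by
          apply pow_le_pow_left₀ (abs_nonneg _)
          exact Complex.abs_re_le_norm _
  have h2 : ‖(inner ℂ (toE A) (toE B) : ℂ)‖ ^ 2 ≤ (‖toE A‖ * ‖toE B‖) ^ 2 := by
    have := norm_inner_le_norm (𝕜 := ℂ) (toE A) (toE B)
    nlinarith [norm_nonneg (inner ℂ (toE A) (toE B) : ℂ), norm_nonneg (toE A), norm_nonneg (toE B)]
  have h3 : (‖toE A‖ * ‖toE B‖) ^ 2 = (inner ℂ (toE A) (toE A) : ℂ).re * (inner ℂ (toE B) (toE B) : ℂ).re := by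
    have ha : (inner ℂ (toE A) (toE A) : ℂ).re = ‖toE A‖ ^ 2 := by
      simpa using inner_self_eq_norm_sq (𝕜 := ℂ) (toE A)
    have hb : (inner ℂ (toE B) (toE B) : ℂ).re = ‖toE B‖ ^ 2 := by
      simpa using inner_self_eq_norm_sq (𝕜 := ℂ) (toE B)
    rw [ha, hb]; ring
  linarith



noncomputable def Zc (N : Mat n) : Submodule ℂ (Mat n) := LinearMap.ker (ad N)

lemma mem_Zc {N X : Mat n} : X ∈ Zc N ↔ N * X = X * N := by
  simp [Zc, LinearMap.mem_ker, ad_apply, sub_eq_zero]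

lemma pow_card_eq_zero {N : Mat n} (h : IsNilpotent N) : N ^ n = 0 := by
  have hcp : N.charpoly = Polynomial.X ^ n := by
    have h1 := Matrix.isNilpotent_charpoly_sub_pow_of_isNilpotent h
    have h2 : N.charpoly - Polynomial.X ^ (Fintype.card (Fin n)) = 0 := h1.eq_zero
    rw [Fintype.card_fin] at h2
    exact sub_eq_zero.mp h2
  have hch := Matrix.aeval_self_charpoly N
  rw [hcp] at hch
  simpa using hch

lemma pow_eq_zero_of_card_le {N : Mat n} (h : IsNilpotent N) {m : ℕ} (hm : n ≤ m) :
    N ^ m = 0 := by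
  calc N ^ m = N ^ n * N ^ (m - n) := by rw [← pow_add]; congr 1; omega
  _ = 0 := by rw [pow_card_eq_zero h, zero_mul]

lemma exists_mulVec_ne_zero {M : Mat n} (h : M ≠ 0) : ∃ v : Fin n → ℂ, M.mulVec v ≠ 0 := by
  by_contra hc
  push_neg at hc
  apply h
  ext i j
  have := congrFun (hc (Pi.single j 1)) i
  simpa [Matrix.mulVec_single] using this

lemma key_indep {N : Mat n} (hNn : N ^ n = 0) {v : Fin n → ℂ}
    (hv : (N ^ (n - 1)).mulVec v ≠ 0) (hn : 1 ≤ n) :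
    LinearIndependent ℂ (fun k : Fin n => (N ^ (k : ℕ)).mulVec v) := by
  rw [Fintype.linearIndependent_iff]
  intro g hg
  have main : ∀ m : ℕ, ∀ j : Fin n, (j : ℕ) = m → g j = 0 := by
    intro m
    induction m using Nat.strong_induction_on with
    | _ m ih =>
      intro j hj
      have hmn : m < n := hj ▸ j.isLt
      have h0 : ∑ k : Fin n, g k • (N ^ (n - 1 - m + (k : ℕ))).mulVec v = 0 := by
        have hcong := congrArg (fun w => (N ^ (n - 1 - m)).mulVecLin w) hg
        simpa [map_sum, Matrix.mulVecLin_apply, Matrix.mulVec_mulVec, ← pow_add] using hcong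
      have hsum : ∑ k : Fin n, g k • (N ^ (n - 1 - m + (k : ℕ))).mulVec v
          = g j • (N ^ (n - 1)).mulVec v := by
        rw [Finset.sum_eq_single j]
        · have he : n - 1 - m + (j : ℕ) = n - 1 := by omega
          rw [he]
        · intro k _ hk
          rcases lt_or_gt_of_ne (fun h : (k : ℕ) = m => hk (Fin.ext (by omega))) with hlt | hgt
          · rw [ih _ hlt k rfl, zero_smul]
          · have : N ^ (n - 1 - m + (k : ℕ)) = 0 :=
              pow_eq_zero_of_card_le ⟨n, hNn⟩ (by omega)
            rw [this]
            simp
        · intro hj'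
          exact absurd (Finset.mem_univ j) hj'
      rw [hsum] at h0
      rcases smul_eq_zero.mp h0 with h | h
      · exact h
      · exact absurd h hv
  intro j
  exact main (j : ℕ) j rfl

/-- the matrix-to-vector evaluation map -/
noncomputable def evalVec (v : Fin n → ℂ) : Mat n →ₗ[ℂ] (Fin n → ℂ) where
  toFun M := M.mulVec v
  map_add' A B := Matrix.add_mulVec A B v
  map_smul' c A := by simp [Matrix.smul_mulVec]

lemma powers_indep {N : Mat n} (hnil : IsNilpotent N) (hne : N ^ (n - 1) ≠ 0) (hn : 1 ≤ n) :
    LinearIndependent ℂ (fun k : Fin n => N ^ (k : ℕ)) := by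
  obtain ⟨v, hv⟩ := exists_mulVec_ne_zero hne
  have h := key_indep (pow_card_eq_zero hnil) hv hn
  exact LinearIndependent.of_comp (evalVec v) h

lemma Zc_eq_span {N : Mat n} (hnil : IsNilpotent N) (hne : N ^ (n - 1) ≠ 0) (hn : 1 ≤ n) :
    Zc N = Submodule.span ℂ (Set.range fun k : Fin n => N ^ (k : ℕ)) := by
  apply le_antisymm
  · -- the hard direction
    obtain ⟨v, hv⟩ := exists_mulVec_ne_zero hne
    have hind := key_indep (pow_card_eq_zero hnil) hv hn
    have hcard : Fintype.card (Fin n) = finrank ℂ (Fin n → ℂ) := by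
      simp [Module.finrank_pi]
    have : Nonempty (Fin n) := ⟨⟨0, hn⟩⟩
    let b : Basis (Fin n) ℂ (Fin n → ℂ) := basisOfLinearIndependentOfCardEqFinrank hind hcard
    have hb : ∀ k : Fin n, b k = (N ^ (k : ℕ)).mulVec v := fun k => by
      simp only [b, coe_basisOfLinearIndependentOfCardEqFinrank]
    intro X hX
    rw [mem_Zc] at hX
    have hcommX : ∀ i : ℕ, X * N ^ i = N ^ i * X := fun i =>
      ((show Commute X N from hX.symm).pow_right i).eq
    set c : Fin n → ℂ := fun k => b.repr (X.mulVec v) k with hc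
    set P : Mat n := ∑ k : Fin n, c k • N ^ (k : ℕ) with hP
    have hPv : P.mulVec v = X.mulVec v := by
      have h1 : P.mulVec v = ∑ k : Fin n, c k • (N ^ (k : ℕ)).mulVec v := by
        show evalVec v P = _
        rw [hP, map_sum]
        exact Finset.sum_congr rfl fun k _ => (evalVec v).map_smul (c k) (N ^ (k : ℕ))
      rw [h1]
      have h2 := b.sum_repr (X.mulVec v)
      calc ∑ k : Fin n, c k • (N ^ (k : ℕ)).mulVec v
          = ∑ k : Fin n, b.repr (X.mulVec v) k • b k := by
            congr 1; ext k; rw [hb k]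
        _ = X.mulVec v := h2
    have hPcomm : ∀ i : ℕ, P * N ^ i = N ^ i * P := by
      intro i
      rw [hP, Finset.sum_mul, Finset.mul_sum]
      congr 1
      ext k
      rw [smul_mul_assoc, mul_smul_comm, ← pow_add, ← pow_add, add_comm]
    have hXP : X = P := by
      have : Matrix.toLin' X = Matrix.toLin' P := by
        apply b.ext
        intro k
        rw [Matrix.toLin'_apply, Matrix.toLin'_apply, hb k,
          Matrix.mulVec_mulVec, Matrix.mulVec_mulVec, hcommX, hPcomm,
          ← Matrix.mulVec_mulVec, ← Matrix.mulVec_mulVec, hPv]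
      exact Matrix.toLin'.injective this
    rw [hXP, hP]
    apply Submodule.sum_mem
    intro k _
    exact Submodule.smul_mem _ _ (Submodule.subset_span ⟨k, rfl⟩)
  · rw [Submodule.span_le]
    rintro _ ⟨k, rfl⟩
    rw [SetLike.mem_coe, mem_Zc, ← pow_succ, ← pow_succ']

lemma finrank_Zc {N : Mat n} (hnil : IsNilpotent N) (hne : N ^ (n - 1) ≠ 0) (hn : 1 ≤ n) :
    finrank ℂ (Zc N) = n := by
  rw [Zc_eq_span hnil hne hn, finrank_span_eq_card (powers_indep hnil hne hn), Fintype.card_fin]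

lemma Zc_comm {N : Mat n} (hnil : IsNilpotent N) (hne : N ^ (n - 1) ≠ 0) (hn : 1 ≤ n)
    {X Y : Mat n} (hX : X ∈ Zc N) (hY : Y ∈ Zc N) : X * Y = Y * X := by
  rw [Zc_eq_span hnil hne hn] at hX
  rw [mem_Zc] at hY
  induction hX using Submodule.span_induction with
  | mem x hx =>
      obtain ⟨k, rfl⟩ := hx
      exact ((show Commute Y N from hY.symm).pow_right (k : ℕ)).symm.eq
  | zero => simp
  | add x y _ _ hx hy => rw [Matrix.add_mul, Matrix.mul_add, hx, hy]
  | smul c x _ hx => rw [smul_mul_assoc, mul_smul_comm, hx]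



lemma ip_add_right (A B C : Mat n) : ip A (B + C) = ip A B + ip A C := by
  simp [ip, Matrix.mul_add]

lemma ip_zero_right (A : Mat n) : ip A 0 = 0 := by simp [ip]

lemma ip_zero_left (A : Mat n) : ip 0 A = 0 := by rw [ip_symm]; exact ip_zero_right A

lemma ad_swap {Φ1 Φ2 : Mat n} (h : Φ1 * Φ2 = Φ2 * Φ1) (X : Mat n) :
    ad Φ2 (ad Φ1 X) = ad Φ1 (ad Φ2 X) := by
  simp only [ad_apply, Matrix.mul_sub, Matrix.sub_mul, Matrix.mul_assoc]
  rw [← Matrix.mul_assoc Φ2 Φ1 X, ← h, Matrix.mul_assoc Φ1 Φ2 X]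
  abel

lemma conjT_nil {Φ : Mat n} (h : IsNilpotent Φ) : IsNilpotent Φᴴ := by
  obtain ⟨k, hk⟩ := h
  exact ⟨k, by rw [← conjTranspose_pow, hk, conjTranspose_zero]⟩

lemma conjT_ne {Φ : Mat n} (h : Φ ^ (n - 1) ≠ 0) : Φᴴ ^ (n - 1) ≠ 0 := by
  intro hc
  apply h
  have := congrArg conjTranspose hc
  rwa [← conjTranspose_pow, conjTranspose_conjTranspose, conjTranspose_zero] at this

/-- the key independence lemma -/
lemma IND (hn : 2 ≤ n) (Φ1 Φ2 : Mat n) (hcomm : Φ1 * Φ2 = Φ2 * Φ1)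
    (hnil : IsNilpotent Φ1) (hne : Φ1 ^ (n - 1) ≠ 0) (hpos : IsPositivePair Φ1 Φ2)
    (X Y C D : Mat n) (hC : C ∈ Zc Φ1) (hD : D ∈ Zc Φ1ᴴ)
    (h1 : ad Φ1 X + ad Φ2ᴴ Y + D = 0)
    (h2 : ad Φ2 X + ad Φ1ᴴ Y + C = 0) :
    ad Φ1 X = 0 ∧ ad Φ2 X = 0 ∧ ad Φ2ᴴ Y = 0 ∧ ad Φ1ᴴ Y = 0 ∧ C = 0 ∧ D = 0 := by
  have hn1 : 1 ≤ n := le_trans (by norm_num) hn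
  set u := ad Φ1 X with hu
  set v := ad Φ2 X with hv
  set w := ad Φ1ᴴ Y with hw
  set s := ad Φ2ᴴ Y with hs
  have hΦ2mem : Φ2 ∈ Zc Φ1 := mem_Zc.mpr hcomm
  have hΦ2Hmem : Φ2ᴴ ∈ Zc Φ1ᴴ := by
    rw [mem_Zc, ← conjTranspose_mul, ← conjTranspose_mul, hcomm]
  have hnilH := conjT_nil hnil
  have hneH := conjT_ne hne
  have hD0 : ad Φ1ᴴ D = 0 := by
    rw [ad_apply, sub_eq_zero]; exact mem_Zc.mp hD
  have hC0 : ad Φ1 C = 0 := by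
    rw [ad_apply, sub_eq_zero]; exact mem_Zc.mp hC
  have hipuD : ip u D = 0 := by rw [hu, ip_adjoint, hD0, ip_zero_right]
  have hipwC : ip w C = 0 := by
    have h' := ip_adjoint Φ1ᴴ Y C
    rw [conjTranspose_conjTranspose] at h'
    rw [hw, h', hC0, ip_zero_right]
  have hipus : ip u s = ip v w := by
    rw [hs, ← ip_adjoint Φ2 u Y, hu, ad_swap hcomm, ← hv, ip_adjoint]
  have h1' : ip u u + ip u s + ip u D = 0 := by
    have h' : ip u (u + s + D) = 0 := by rw [h1, ip_zero_right]
    rwa [ip_add_right, ip_add_right] at h'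
  have h2' : ip w v + ip w w + ip w C = 0 := by
    have h' : ip w (v + w + C) = 0 := by rw [h2, ip_zero_right]
    rwa [ip_add_right, ip_add_right] at h'
  have euu : ip u u = - ip v w := by
    have := hipus; have := hipuD; linarith
  have eww : ip w w = - ip v w := by
    rw [ip_symm w v] at h2'
    have := hipwC; linarith
  have hcs := ip_cauchy_schwarz v w
  have hu0 : u = 0 := by
    by_contra hune
    have hXne : Φ1 * X - X * Φ1 ≠ 0 := by rwa [hu, ad_apply] at hune
    have hlt : ip v v < ip u u := hpos X hXne
    have huu : 0 < ip u u :=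
      lt_of_le_of_ne (ip_self_nonneg u) (fun h => hune (ip_self_eq_zero h.symm))
    nlinarith [ip_self_nonneg v, ip_self_nonneg w]
  have hXZ : X ∈ Zc Φ1 := by
    rw [mem_Zc, ← sub_eq_zero, ← ad_apply]; exact hu0
  have hv0 : v = 0 := by
    rw [hv, ad_apply, sub_eq_zero]
    exact Zc_comm hnil hne hn1 hΦ2mem hXZ
  have hw0 : w = 0 := by
    apply ip_self_eq_zero
    rw [eww, hv0, ip_zero_left, neg_zero]
  have hYZ : Y ∈ Zc Φ1ᴴ := by
    rw [mem_Zc, ← sub_eq_zero, ← ad_apply]; exact hw0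
  have hs0 : s = 0 := by
    rw [hs, ad_apply, sub_eq_zero]
    exact Zc_comm hnilH hneH hn1 hΦ2Hmem hYZ
  refine ⟨hu0, hv0, hs0, hw0, ?_, ?_⟩
  · have h2c := h2; rw [hv0, hw0] at h2c; simpa using h2c
  · have h1c := h1; rw [hu0, hs0] at h1c; simpa using h1c

/-! dimension counting -/

noncomputable def tl (n : ℕ) : Mat n →ₗ[ℂ] ℂ := Matrix.traceLinearMap (Fin n) ℂ ℂ

noncomputable def sl (n : ℕ) : Submodule ℂ (Mat n) := LinearMap.ker (tl n)

lemma mem_sl {X : Mat n} : X ∈ sl n ↔ X.trace = 0 := Iff.rfl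

lemma tl_apply (M : Mat n) : tl n M = M.trace := rfl

lemma tl_surj (hn : 1 ≤ n) : Function.Surjective (tl n) := by
  intro c
  have h0 : 0 < n := hn
  refine ⟨Matrix.single (⟨0, h0⟩ : Fin n) (⟨0, h0⟩ : Fin n) c, ?_⟩
  rw [tl_apply]
  exact Matrix.trace_single_eq_same _ c

lemma finrank_Mat : finrank ℂ (Mat n) = n * n := by
  have h := Module.finrank_matrix (R := ℂ) (M := ℂ) (m := Fin n) (n := Fin n)
  simpa using h

lemma finrank_sl (hn : 1 ≤ n) : finrank ℂ (sl n) + 1 = n * n := by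
  have h1 := LinearMap.finrank_range_add_finrank_ker (tl n)
  rw [LinearMap.range_eq_top.mpr (tl_surj hn), finrank_top, finrank_Mat] at h1
  rw [finrank_self ℂ] at h1
  unfold sl
  omega

lemma finrank_inf_sl_add_one {Z : Submodule ℂ (Mat n)} {z : Mat n} (hz : z ∈ Z)
    (hzt : z.trace ≠ 0) :
    finrank ℂ ↥(Z ⊓ sl n) + 1 = finrank ℂ ↥Z := by
  set t' : Z →ₗ[ℂ] ℂ := (tl n).comp Z.subtype with ht'
  have hker : LinearMap.ker t' = Submodule.comap Z.subtype (sl n) := rfl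
  have hsurj : Function.Surjective t' := by
    intro c
    refine ⟨(c * z.trace⁻¹) • ⟨z, hz⟩, ?_⟩
    show ((c * z.trace⁻¹) • z).trace = c
    rw [Matrix.trace_smul, smul_eq_mul]
    field_simp
  have h1 := LinearMap.finrank_range_add_finrank_ker t'
  rw [LinearMap.range_eq_top.mpr hsurj, finrank_top, finrank_self ℂ] at h1
  have h2 : finrank ℂ ↥(LinearMap.ker t') = finrank ℂ ↥(Z ⊓ sl n) := by
    rw [hker]
    have e := Submodule.equivMapOfInjective Z.subtype (Submodule.injective_subtype Z)
      (Submodule.comap Z.subtype (sl n))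
    rw [e.finrank_eq, Submodule.map_comap_subtype, inf_comm]
  omega

/-! ## Assembly -/

noncomputable def adP (Φ1 Φ2 : Mat n) : Mat n →ₗ[ℂ] Mat n × Mat n := (ad Φ1).prod (ad Φ2)
noncomputable def adQ (Φ1 Φ2 : Mat n) : Mat n →ₗ[ℂ] Mat n × Mat n := (ad Φ2ᴴ).prod (ad Φ1ᴴ)

lemma adP_apply (Φ1 Φ2 X : Mat n) :
    adP Φ1 Φ2 X = (Φ1 * X - X * Φ1, Φ2 * X - X * Φ2) := rfl

lemma adQ_apply (Φ1 Φ2 Y : Mat n) :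
    adQ Φ1 Φ2 Y = (Φ2ᴴ * Y - Y * Φ2ᴴ, Φ1ᴴ * Y - Y * Φ1ᴴ) := rfl

noncomputable def V1 (Φ1 Φ2 : Mat n) : Submodule ℂ (Mat n × Mat n) :=
  LinearMap.range (adP Φ1 Φ2)
noncomputable def V2 (Φ1 Φ2 : Mat n) : Submodule ℂ (Mat n × Mat n) :=
  LinearMap.range (adQ Φ1 Φ2)
noncomputable def V3 (Φ1 : Mat n) : Submodule ℂ (Mat n × Mat n) :=
  Submodule.map (LinearMap.inr ℂ (Mat n) (Mat n)) (Zc Φ1 ⊓ sl n)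
noncomputable def V4 (Φ1 : Mat n) : Submodule ℂ (Mat n × Mat n) :=
  Submodule.map (LinearMap.inl ℂ (Mat n) (Mat n)) (Zc Φ1ᴴ ⊓ sl n)
noncomputable def slsl (n : ℕ) : Submodule ℂ (Mat n × Mat n) :=
  LinearMap.ker ((tl n).prodMap (tl n))

lemma mem_slsl {z : Mat n × Mat n} : z ∈ slsl n ↔ z.1.trace = 0 ∧ z.2.trace = 0 := by
  constructor
  · intro h
    rw [slsl, LinearMap.mem_ker] at h
    exact ⟨congrArg Prod.fst h, congrArg Prod.snd h⟩
  · intro ⟨h1, h2⟩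
    rw [slsl, LinearMap.mem_ker, LinearMap.prodMap_apply]
    rw [show (0 : ℂ × ℂ) = ((0 : ℂ), (0 : ℂ)) from rfl]
    exact Prod.ext (by simpa [tl_apply] using h1) (by simpa [tl_apply] using h2)

lemma trace_ad (M X : Mat n) : (ad M X).trace = 0 := by
  rw [ad_apply, Matrix.trace_sub, Matrix.trace_mul_comm, sub_self]

section Main

variable {Φ1 Φ2 : Mat n} (hn : 2 ≤ n) (hcomm : Φ1 * Φ2 = Φ2 * Φ1)
  (hnil : IsNilpotent Φ1) (hne : Φ1 ^ (n - 1) ≠ 0) (hpos : IsPositivePair Φ1 Φ2)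

include hn hcomm hnil hne

lemma ker_adP : LinearMap.ker (adP Φ1 Φ2) = Zc Φ1 := by
  have hn1 : 1 ≤ n := by omega
  apply le_antisymm
  · intro X hX
    rw [LinearMap.mem_ker] at hX
    have h1 : ad Φ1 X = 0 := congrArg Prod.fst hX
    exact LinearMap.mem_ker.mpr h1
  · intro X hX
    have h1 : ad Φ1 X = 0 := LinearMap.mem_ker.mp hX
    have h2 : ad Φ2 X = 0 := by
      rw [ad_apply, sub_eq_zero]
      exact Zc_comm hnil hne hn1 (mem_Zc.mpr hcomm) hX
    rw [LinearMap.mem_ker]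
    show ((ad Φ1) X, (ad Φ2) X) = 0
    rw [h1, h2]
    rfl

lemma ker_adQ : LinearMap.ker (adQ Φ1 Φ2) = Zc Φ1ᴴ := by
  have hn1 : 1 ≤ n := by omega
  apply le_antisymm
  · intro Y hY
    rw [LinearMap.mem_ker] at hY
    have h1 : ad Φ1ᴴ Y = 0 := congrArg Prod.snd hY
    exact LinearMap.mem_ker.mpr h1
  · intro Y hY
    have h1 : ad Φ1ᴴ Y = 0 := LinearMap.mem_ker.mp hY
    have hcH : Φ1ᴴ * Φ2ᴴ = Φ2ᴴ * Φ1ᴴ := by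
      rw [← conjTranspose_mul, ← conjTranspose_mul, hcomm]
    have h2 : ad Φ2ᴴ Y = 0 := by
      rw [ad_apply, sub_eq_zero]
      exact Zc_comm (conjT_nil hnil) (conjT_ne hne) hn1 (mem_Zc.mpr hcH) hY
    rw [LinearMap.mem_ker]
    show ((ad Φ2ᴴ) Y, (ad Φ1ᴴ) Y) = 0
    rw [h1, h2]
    rfl

lemma finrank_V1 : finrank ℂ (V1 Φ1 Φ2) + n = n * n := by
  have h := LinearMap.finrank_range_add_finrank_ker (adP Φ1 Φ2)
  rw [ker_adP hn hcomm hnil hne, finrank_Zc hnil hne (by omega), finrank_Mat] at h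
  exact h

lemma finrank_V2 : finrank ℂ (V2 Φ1 Φ2) + n = n * n := by
  have h := LinearMap.finrank_range_add_finrank_ker (adQ Φ1 Φ2)
  rw [ker_adQ hn hcomm hnil hne, finrank_Zc (conjT_nil hnil) (conjT_ne hne) (by omega),
    finrank_Mat] at h
  exact h

omit hcomm in
lemma finrank_Zsl1 : finrank ℂ ↥(Zc Φ1 ⊓ sl n) + 1 = n := by
  have h1 : (1 : Mat n) ∈ Zc Φ1 := mem_Zc.mpr (by rw [Matrix.mul_one, Matrix.one_mul])
  have ht : (1 : Mat n).trace ≠ 0 := by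
    rw [Matrix.trace_one]
    simp only [Fintype.card_fin]
    exact_mod_cast (by omega : n ≠ 0)
  have h := finrank_inf_sl_add_one h1 ht
  rw [finrank_Zc hnil hne (by omega)] at h
  exact h

omit hcomm in
lemma finrank_Zsl2 : finrank ℂ ↥(Zc Φ1ᴴ ⊓ sl n) + 1 = n := by
  have h1 : (1 : Mat n) ∈ Zc Φ1ᴴ := mem_Zc.mpr (by rw [Matrix.mul_one, Matrix.one_mul])
  have ht : (1 : Mat n).trace ≠ 0 := by
    rw [Matrix.trace_one]
    simp only [Fintype.card_fin]
    exact_mod_cast (by omega : n ≠ 0)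
  have h := finrank_inf_sl_add_one h1 ht
  rw [finrank_Zc (conjT_nil hnil) (conjT_ne hne) (by omega)] at h
  exact h

omit hn hcomm hnil hne in
lemma finrank_V3 : finrank ℂ (V3 Φ1) = finrank ℂ ↥(Zc Φ1 ⊓ sl n) := by
  exact (Submodule.equivMapOfInjective _ LinearMap.inr_injective (Zc Φ1 ⊓ sl n)).finrank_eq.symm

omit hn hcomm hnil hne in
lemma finrank_V4 : finrank ℂ (V4 Φ1) = finrank ℂ ↥(Zc Φ1ᴴ ⊓ sl n) := by
  exact (Submodule.equivMapOfInjective _ LinearMap.inl_injective (Zc Φ1ᴴ ⊓ sl n)).finrank_eq.symm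

omit hcomm hnil hne in
lemma finrank_slsl : finrank ℂ (slsl n) + 2 = 2 * (n * n) := by
  have hsurj : Function.Surjective ((tl n).prodMap (tl n)) := by
    rintro ⟨c, d⟩
    obtain ⟨x, hx⟩ := tl_surj (n := n) (by omega) c
    obtain ⟨y, hy⟩ := tl_surj (n := n) (by omega) d
    exact ⟨(x, y), by rw [LinearMap.prodMap_apply, hx, hy]⟩
  have h := LinearMap.finrank_range_add_finrank_ker ((tl n).prodMap (tl n))
  rw [LinearMap.range_eq_top.mpr hsurj, finrank_top, Module.finrank_prod,
    Module.finrank_prod, finrank_self, finrank_Mat] at h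
  unfold slsl
  omega

omit hn hnil hne in
lemma V1_le : V1 Φ1 Φ2 ≤ slsl n := by
  rintro _ ⟨X, rfl⟩
  exact mem_slsl.mpr ⟨trace_ad Φ1 X, trace_ad Φ2 X⟩

omit hn hnil hne in
lemma V2_le : V2 Φ1 Φ2 ≤ slsl n := by
  rintro _ ⟨Y, rfl⟩
  exact mem_slsl.mpr ⟨trace_ad Φ2ᴴ Y, trace_ad Φ1ᴴ Y⟩

omit hn hcomm hnil hne in
lemma V3_le : V3 Φ1 ≤ slsl n := by
  rintro _ ⟨C, hC, rfl⟩
  exact mem_slsl.mpr ⟨Matrix.trace_zero _ _, hC.2⟩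

omit hn hcomm hnil hne in
lemma V4_le : V4 Φ1 ≤ slsl n := by
  rintro _ ⟨D, hD, rfl⟩
  exact mem_slsl.mpr ⟨hD.2, Matrix.trace_zero _ _⟩

include hpos

lemma inf12 : V1 Φ1 Φ2 ⊓ V2 Φ1 Φ2 = ⊥ := by
  rw [eq_bot_iff]
  rintro z ⟨hz1, hz2⟩
  obtain ⟨X, hX⟩ := hz1
  obtain ⟨Y, hY⟩ := hz2
  have hX1 : ad Φ1 X = z.1 := congrArg Prod.fst hX
  have hX2 : ad Φ2 X = z.2 := congrArg Prod.snd hX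
  have hY1 : ad Φ2ᴴ Y = z.1 := congrArg Prod.fst hY
  have hY2 : ad Φ1ᴴ Y = z.2 := congrArg Prod.snd hY
  have h1 : ad Φ1 X + ad Φ2ᴴ (-Y) + (0 : Mat n) = 0 := by
    rw [map_neg, hX1, hY1]; abel
  have h2 : ad Φ2 X + ad Φ1ᴴ (-Y) + (0 : Mat n) = 0 := by
    rw [map_neg, hX2, hY2]; abel
  obtain ⟨e1, e2, _, _, _, _⟩ := IND hn Φ1 Φ2 hcomm hnil hne hpos X (-Y) 0 0
    (zero_mem _) (zero_mem _) h1 h2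
  rw [Submodule.mem_bot]
  exact Prod.ext (by rw [← hX1, e1]; rfl) (by rw [← hX2, e2]; rfl)

lemma inf123 : (V1 Φ1 Φ2 ⊔ V2 Φ1 Φ2) ⊓ V3 Φ1 = ⊥ := by
  rw [eq_bot_iff]
  rintro z ⟨hz12, hz3⟩
  obtain ⟨p1, hp1, p2, hp2, hsum⟩ := Submodule.mem_sup.mp hz12
  obtain ⟨X, hX⟩ := hp1
  obtain ⟨Y, hY⟩ := hp2
  obtain ⟨C, hCmem, hCz⟩ := hz3
  -- z = (0, C)
  have hz1 : z.1 = 0 := by rw [← hCz]; rfl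
  have hz2 : z.2 = C := by rw [← hCz]; rfl
  have hX1 : ad Φ1 X = p1.1 := congrArg Prod.fst hX
  have hX2 : ad Φ2 X = p1.2 := congrArg Prod.snd hX
  have hY1 : ad Φ2ᴴ Y = p2.1 := congrArg Prod.fst hY
  have hY2 : ad Φ1ᴴ Y = p2.2 := congrArg Prod.snd hY
  have hs1 : p1.1 + p2.1 = z.1 := by rw [← hsum]; rfl
  have hs2 : p1.2 + p2.2 = z.2 := by rw [← hsum]; rfl
  have h1 : ad Φ1 X + ad Φ2ᴴ Y + (0 : Mat n) = 0 := by
    rw [add_zero, hX1, hY1, hs1, hz1]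
  have h2 : ad Φ2 X + ad Φ1ᴴ Y + (-C) = 0 := by
    rw [hX2, hY2, hs2, hz2]; abel
  obtain ⟨_, _, _, _, eC, _⟩ := IND hn Φ1 Φ2 hcomm hnil hne hpos X Y (-C) 0
    (neg_mem hCmem.1) (zero_mem _) h1 h2
  have hC0 : C = 0 := by simpa using eC
  rw [Submodule.mem_bot]
  exact Prod.ext (by rw [hz1]; rfl) (by rw [hz2, hC0]; rfl)

lemma inf1234 : (V1 Φ1 Φ2 ⊔ V2 Φ1 Φ2 ⊔ V3 Φ1) ⊓ V4 Φ1 = ⊥ := by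
  rw [eq_bot_iff]
  rintro z ⟨hz123, hz4⟩
  obtain ⟨p12, hp12, p3, hp3, hsum1⟩ := Submodule.mem_sup.mp hz123
  obtain ⟨p1, hp1, p2, hp2, hsum2⟩ := Submodule.mem_sup.mp hp12
  obtain ⟨X, hX⟩ := hp1
  obtain ⟨Y, hY⟩ := hp2
  obtain ⟨C, hCmem, hCz⟩ := hp3
  obtain ⟨D, hDmem, hDz⟩ := hz4
  have hz1 : z.1 = D := by rw [← hDz]; rfl
  have hz2 : z.2 = 0 := by rw [← hDz]; rfl
  have hp31 : p3.1 = 0 := by rw [← hCz]; rfl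
  have hp32 : p3.2 = C := by rw [← hCz]; rfl
  have hX1 : ad Φ1 X = p1.1 := congrArg Prod.fst hX
  have hX2 : ad Φ2 X = p1.2 := congrArg Prod.snd hX
  have hY1 : ad Φ2ᴴ Y = p2.1 := congrArg Prod.fst hY
  have hY2 : ad Φ1ᴴ Y = p2.2 := congrArg Prod.snd hY
  have hs1 : p1.1 + p2.1 + p3.1 = z.1 := by rw [← hsum1, ← hsum2]; rfl
  have hs2 : p1.2 + p2.2 + p3.2 = z.2 := by rw [← hsum1, ← hsum2]; rfl
  rw [hp31, add_zero] at hs1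
  rw [hp32] at hs2
  have h1 : ad Φ1 X + ad Φ2ᴴ Y + (-D) = 0 := by
    rw [hX1, hY1, hs1, hz1]; abel
  have h2 : ad Φ2 X + ad Φ1ᴴ Y + C = 0 := by
    have : p1.2 + p2.2 = z.2 - C := by rw [← hs2]; abel
    rw [hX2, hY2, this, hz2]; abel
  obtain ⟨_, _, _, _, eC, eD⟩ := IND hn Φ1 Φ2 hcomm hnil hne hpos X Y C (-D)
    hCmem.1 (neg_mem hDmem.1) h1 h2
  have hD0 : D = 0 := by simpa using eD
  rw [Submodule.mem_bot]
  exact Prod.ext (by rw [hz1, hD0]; rfl) (by rw [hz2]; rfl)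

lemma sup_eq_slsl : V1 Φ1 Φ2 ⊔ V2 Φ1 Φ2 ⊔ V3 Φ1 ⊔ V4 Φ1 = slsl n := by
  have f12 := Submodule.finrank_sup_add_finrank_inf_eq (V1 Φ1 Φ2) (V2 Φ1 Φ2)
  rw [inf12 hn hcomm hnil hne hpos, finrank_bot, add_zero] at f12
  have f123 := Submodule.finrank_sup_add_finrank_inf_eq (V1 Φ1 Φ2 ⊔ V2 Φ1 Φ2) (V3 Φ1)
  rw [inf123 hn hcomm hnil hne hpos, finrank_bot, add_zero] at f123
  have f1234 := Submodule.finrank_sup_add_finrank_inf_eq (V1 Φ1 Φ2 ⊔ V2 Φ1 Φ2 ⊔ V3 Φ1) (V4 Φ1)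
  rw [inf1234 hn hcomm hnil hne hpos, finrank_bot, add_zero] at f1234
  have hle : V1 Φ1 Φ2 ⊔ V2 Φ1 Φ2 ⊔ V3 Φ1 ⊔ V4 Φ1 ≤ slsl n :=
    sup_le (sup_le (sup_le (V1_le hcomm) (V2_le hcomm)) V3_le) V4_le
  apply Submodule.eq_of_le_of_finrank_le hle
  have e1 := finrank_V1 hn hcomm hnil hne
  have e2 := finrank_V2 hn hcomm hnil hne
  have e3 := finrank_V3 (Φ1 := Φ1)
  have e4 := finrank_V4 (Φ1 := Φ1)
  have e5 := finrank_Zsl1 hn hnil hne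
  have e6 := finrank_Zsl2 hn hnil hne
  have e7 := finrank_slsl (n := n) hn
  omega

end Main

section Uniq

variable {Φ1 Φ2 : Mat n} (hn : 2 ≤ n) (hcomm : Φ1 * Φ2 = Φ2 * Φ1)
  (hnil : IsNilpotent Φ1) (hne : Φ1 ^ (n - 1) ≠ 0) (hpos : IsPositivePair Φ1 Φ2)

include hn hcomm hnil hne hpos in
lemma uniq_aux (X X' Y Y' C C' D D' : Mat n)
    (hC : Φ1 * C - C * Φ1 = 0) (hC' : Φ1 * C' - C' * Φ1 = 0)
    (hD : Φ1ᴴ * D - D * Φ1ᴴ = 0) (hD' : Φ1ᴴ * D' - D' * Φ1ᴴ = 0)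
    (hsum1 : ad Φ1 X + ad Φ2ᴴ Y + D = ad Φ1 X' + ad Φ2ᴴ Y' + D')
    (hsum2 : ad Φ2 X + ad Φ1ᴴ Y + C = ad Φ2 X' + ad Φ1ᴴ Y' + C') :
    ad Φ1 X = ad Φ1 X' ∧ ad Φ2 X = ad Φ2 X' ∧ ad Φ2ᴴ Y = ad Φ2ᴴ Y' ∧
      ad Φ1ᴴ Y = ad Φ1ᴴ Y' ∧ C = C' ∧ D = D' := by
  have h1 : ad Φ1 (X - X') + ad Φ2ᴴ (Y - Y') + (D - D') = 0 := by
    rw [map_sub, map_sub]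
    have h := sub_eq_zero.mpr hsum1
    rw [← h]; abel
  have h2 : ad Φ2 (X - X') + ad Φ1ᴴ (Y - Y') + (C - C') = 0 := by
    rw [map_sub, map_sub]
    have h := sub_eq_zero.mpr hsum2
    rw [← h]; abel
  have hCm : C - C' ∈ Zc Φ1 :=
    sub_mem (mem_Zc.mpr (sub_eq_zero.mp hC)) (mem_Zc.mpr (sub_eq_zero.mp hC'))
  have hDm : D - D' ∈ Zc Φ1ᴴ :=
    sub_mem (mem_Zc.mpr (sub_eq_zero.mp hD)) (mem_Zc.mpr (sub_eq_zero.mp hD'))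
  obtain ⟨e1, e2, e3, e4, e5, e6⟩ := IND hn Φ1 Φ2 hcomm hnil hne hpos (X - X') (Y - Y')
    (C - C') (D - D') hCm hDm h1 h2
  rw [map_sub, sub_eq_zero] at e1 e2 e3 e4
  rw [sub_eq_zero] at e5 e6
  exact ⟨e1, e2, e3, e4, e5, e6⟩

end Uniq

end FourFold

open FourFold

/-- For a positive commuting pair `(Φ1, Φ2)` of traceless matrices with `Φ1` principal
nilpotent, `sl × sl` decomposes as the internal direct sum
`Im(ad_Φ) ⊕ Im(ad_{Φ*}) ⊕ Z(Φ)·K̄ ⊕ Z(Φ*)·K`: every pair `(a, b)` of traceless matrices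
has a unique decomposition as a sum of elements of the four subspaces. -/
theorem positive_pair_four_fold_decomposition
    (n : ℕ) (hn : 2 ≤ n) (Φ1 Φ2 : Matrix (Fin n) (Fin n) ℂ)
    (h1tr : Φ1.trace = 0) (h2tr : Φ2.trace = 0)
    (hcomm : Φ1 * Φ2 = Φ2 * Φ1)
    (hpn : IsNilpotent Φ1 ∧ Φ1 ^ (n - 1) ≠ 0)
    (hpos : IsPositivePair Φ1 Φ2) :
    ∀ a b : Matrix (Fin n) (Fin n) ℂ, a.trace = 0 → b.trace = 0 →
      ∃! x : (Matrix (Fin n) (Fin n) ℂ × Matrix (Fin n) (Fin n) ℂ) ×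
          (Matrix (Fin n) (Fin n) ℂ × Matrix (Fin n) (Fin n) ℂ) ×
          (Matrix (Fin n) (Fin n) ℂ × Matrix (Fin n) (Fin n) ℂ) ×
          (Matrix (Fin n) (Fin n) ℂ × Matrix (Fin n) (Fin n) ℂ),
        (∃ X : Matrix (Fin n) (Fin n) ℂ, X.trace = 0 ∧
            x.1 = (Φ1 * X - X * Φ1, Φ2 * X - X * Φ2)) ∧
        (∃ Y : Matrix (Fin n) (Fin n) ℂ, Y.trace = 0 ∧
            x.2.1 = (Φ2ᴴ * Y - Y * Φ2ᴴ, Φ1ᴴ * Y - Y * Φ1ᴴ)) ∧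
        (x.2.2.1.1 = 0 ∧ x.2.2.1.2.trace = 0 ∧
            Φ1 * x.2.2.1.2 - x.2.2.1.2 * Φ1 = 0 ∧
            Φ2 * x.2.2.1.2 - x.2.2.1.2 * Φ2 = 0) ∧
        (x.2.2.2.2 = 0 ∧ x.2.2.2.1.trace = 0 ∧
            Φ1ᴴ * x.2.2.2.1 - x.2.2.2.1 * Φ1ᴴ = 0 ∧
            Φ2ᴴ * x.2.2.2.1 - x.2.2.2.1 * Φ2ᴴ = 0) ∧
        x.1 + x.2.1 + x.2.2.1 + x.2.2.2 = (a, b) := by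
  obtain ⟨hnil, hne⟩ := hpn
  have hn1 : 1 ≤ n := by omega
  have hnC : (n : ℂ) ≠ 0 := Nat.cast_ne_zero.mpr (by omega)
  have hΦ2mem : Φ2 ∈ Zc Φ1 := mem_Zc.mpr hcomm
  have hcH : Φ1ᴴ * Φ2ᴴ = Φ2ᴴ * Φ1ᴴ := by
    rw [← conjTranspose_mul, ← conjTranspose_mul, hcomm]
  have hΦ2Hmem : Φ2ᴴ ∈ Zc Φ1ᴴ := mem_Zc.mpr hcH
  have hnilH := conjT_nil hnil
  have hneH := conjT_ne hne
  intro a b ha hb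
  -- existence
  have hmem : (a, b) ∈ slsl n := mem_slsl.mpr ⟨ha, hb⟩
  rw [← sup_eq_slsl hn hcomm hnil hne hpos] at hmem
  obtain ⟨p123, hp123, p4, hp4, hsum4⟩ := Submodule.mem_sup.mp hmem
  obtain ⟨p12, hp12, p3, hp3, hsum3⟩ := Submodule.mem_sup.mp hp123
  obtain ⟨p1, hp1, p2, hp2, hsum2⟩ := Submodule.mem_sup.mp hp12
  obtain ⟨X0, hX0⟩ := hp1
  obtain ⟨Y0, hY0⟩ := hp2
  obtain ⟨C, hCmem, hCz⟩ := hp3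
  obtain ⟨D, hDmem, hDz⟩ := hp4
  have hCz' : ((0 : Matrix (Fin n) (Fin n) ℂ), C) = p3 := hCz
  have hDz' : (D, (0 : Matrix (Fin n) (Fin n) ℂ)) = p4 := hDz
  have honeP : adP Φ1 Φ2 (1 : Mat n) = 0 := by
    show ((ad Φ1) 1, (ad Φ2) 1) = 0
    rw [ad_apply, ad_apply, Matrix.mul_one, Matrix.one_mul, sub_self,
      Matrix.mul_one, Matrix.one_mul, sub_self]
    rfl
  have honeQ : adQ Φ1 Φ2 (1 : Mat n) = 0 := by
    show ((ad Φ2ᴴ) 1, (ad Φ1ᴴ) 1) = 0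
    rw [ad_apply, ad_apply, Matrix.mul_one, Matrix.one_mul, sub_self,
      Matrix.mul_one, Matrix.one_mul, sub_self]
    rfl
  set X : Matrix (Fin n) (Fin n) ℂ := X0 - (X0.trace / n) • 1 with hXdef
  set Y : Matrix (Fin n) (Fin n) ℂ := Y0 - (Y0.trace / n) • 1 with hYdef
  have hXeq : adP Φ1 Φ2 X = p1 := by
    rw [hXdef, map_sub, _root_.map_smul, honeP, smul_zero, sub_zero, hX0]
  have hYeq : adQ Φ1 Φ2 Y = p2 := by
    rw [hYdef, map_sub, _root_.map_smul, honeQ, smul_zero, sub_zero, hY0]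
  have hXtr : X.trace = 0 := by
    rw [hXdef, Matrix.trace_sub, Matrix.trace_smul, Matrix.trace_one]
    simp only [Fintype.card_fin, smul_eq_mul]
    field_simp
    ring
  have hYtr : Y.trace = 0 := by
    rw [hYdef, Matrix.trace_sub, Matrix.trace_smul, Matrix.trace_one]
    simp only [Fintype.card_fin, smul_eq_mul]
    field_simp
    ring
  refine ⟨(p1, p2, (0, C), (D, 0)), ⟨⟨X, hXtr, by rw [← hXeq]; rfl⟩,
    ⟨Y, hYtr, by rw [← hYeq]; rfl⟩,
    ⟨rfl, mem_sl.mp hCmem.2, sub_eq_zero.mpr (mem_Zc.mp hCmem.1),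
      sub_eq_zero.mpr (Zc_comm hnil hne hn1 hΦ2mem hCmem.1)⟩,
    ⟨rfl, mem_sl.mp hDmem.2, sub_eq_zero.mpr (mem_Zc.mp hDmem.1),
      sub_eq_zero.mpr (Zc_comm hnilH hneH hn1 hΦ2Hmem hDmem.1)⟩, ?_⟩, ?_⟩
  · show p1 + p2 + (0, C) + (D, 0) = (a, b)
    rw [hCz', hDz', hsum2, hsum3, hsum4]
  · -- uniqueness
    rintro y ⟨⟨X', hX'tr, hy1⟩, ⟨Y', hY'tr, hy2⟩, ⟨hy31, hy3tr, hy3c1, hy3c2⟩,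
      ⟨hy42, hy4tr, hy4c1, hy4c2⟩, hysum⟩
    -- our chosen tuple's data
    have hx1 : p1 = (Φ1 * X - X * Φ1, Φ2 * X - X * Φ2) := by rw [← hXeq]; rfl
    have hx2 : p2 = (Φ2ᴴ * Y - Y * Φ2ᴴ, Φ1ᴴ * Y - Y * Φ1ᴴ) := by rw [← hYeq]; rfl
    have hxsum : p1 + p2 + ((0 : Mat n), C) + (D, (0 : Mat n)) = (a, b) := by
      rw [hCz', hDz', hsum2, hsum3, hsum4]
    -- component sums
    have hyA : ad Φ1 X' + ad Φ2ᴴ Y' + y.2.2.2.1 = a := by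
      have e := congrArg Prod.fst hysum
      simp only [Prod.fst_add] at e
      rw [congrArg Prod.fst hy1, congrArg Prod.fst hy2, hy31, add_zero] at e
      exact e
    have hyB : ad Φ2 X' + ad Φ1ᴴ Y' + y.2.2.1.2 = b := by
      have e := congrArg Prod.snd hysum
      simp only [Prod.snd_add] at e
      rw [congrArg Prod.snd hy1, congrArg Prod.snd hy2, hy42, add_zero] at e
      exact e
    have hxA : ad Φ1 X + ad Φ2ᴴ Y + D = a := by
      have e := congrArg Prod.fst hxsum
      simp only [Prod.fst_add] at e
      rw [congrArg Prod.fst hx1, congrArg Prod.fst hx2] at e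
      simpa [ad_apply] using e
    have hxB : ad Φ2 X + ad Φ1ᴴ Y + C = b := by
      have e := congrArg Prod.snd hxsum
      simp only [Prod.snd_add] at e
      rw [congrArg Prod.snd hx1, congrArg Prod.snd hx2] at e
      simpa [ad_apply] using e
    obtain ⟨e1, e2, e3, e4, e5, e6⟩ := uniq_aux hn hcomm hnil hne hpos X' X Y' Y
      y.2.2.1.2 C y.2.2.2.1 D hy3c1 (sub_eq_zero.mpr (mem_Zc.mp hCmem.1))
      hy4c1 (sub_eq_zero.mpr (mem_Zc.mp hDmem.1))
      (by rw [hyA, hxA]) (by rw [hyB, hxB])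
    -- now conclude y = (p1, p2, (0,C), (D,0))
    refine Prod.ext ?_ (Prod.ext ?_ (Prod.ext ?_ ?_))
    · rw [hy1, hx1]
      exact Prod.ext e1 e2
    · rw [hy2, hx2]
      exact Prod.ext e3 e4
    · show y.2.2.1 = ((0 : Mat n), C)
      exact Prod.ext hy31 e5
    · show y.2.2.2 = (D, (0 : Mat n))
      exact Prod.ext e6 hy42
end
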